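/- arXiv:0806.3073 — 7 statements merged into one kernel-verified Lean document; each statement's English description precedes it below -/
import Mathlib

section
/- Let G be a connected graph of bounded degree and p > 1. The space BD_p(G) of bounded p-Dirichlet-finite functions, equipped with the norm ‖f‖ = (I_p(f,V))^{1/p} + sup_V |f|, is a commutative Banach algebra under pointwise multiplication: ‖fh‖ ≤ ‖f‖·‖h‖ for all f,h ∈ BD_p(G). -/
open scoped ENNReal Classical

variable {V : Type*}

/-- A graph has degree bounded by `k`. -/
def BoundedDegree (G : SimpleGraph V) (k : ℕ) : Prop :=
  ∀ x : V, (G.neighborSet x).Finite ∧ (G.neighborSet x).ncard ≤ k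

/-- A bounded real-valued function on the vertex set. -/
def BddFun (f : V → ℝ) : Prop := ∃ M : ℝ, ∀ x, |f x| ≤ M

/-- The `p`-Dirichlet sum `I_p(f,V) = Σ_x Σ_{y ∈ N_x} |f(y)-f(x)|^p`. -/
noncomputable def Ip (G : SimpleGraph V) (p : ℝ) (f : V → ℝ) : ℝ≥0∞ :=
  ∑' x : V, ∑' y : V, if G.Adj x y then ENNReal.ofReal (|f y - f x| ^ p) else 0

/-- Membership in `BD_p(G)`: bounded with finite `p`-Dirichlet sum. -/
def MemBDp (G : SimpleGraph V) (p : ℝ) (f : V → ℝ) : Prop :=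
  BddFun f ∧ Ip G p f ≠ ⊤

/-- The `BD_p` norm `(I_p(f,V))^{1/p} + sup_V |f|`. -/
noncomputable def BDpNorm (G : SimpleGraph V) (p : ℝ) (f : V → ℝ) : ℝ :=
  (Ip G p f).toReal ^ (1/p) + ⨆ x, |f x|

/-- The `p`-th power of the `D_p`-distance from `f` to `0` (with base vertex `o`):
`I_p(f,V) + |f(o)|^p`, valued in `ℝ≥0∞`. -/
noncomputable def DpDist (G : SimpleGraph V) (p : ℝ) (o : V) (f : V → ℝ) : ℝ≥0∞ :=
  Ip G p f + ENNReal.ofReal (|f o| ^ p)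

/-- `f` is bounded and lies in the `D_p`-closure of the finitely supported functions:
the space `B(\overline{ℝG})_{D_p}`. -/
def BRClos (G : SimpleGraph V) (p : ℝ) (o : V) (f : V → ℝ) : Prop :=
  BddFun f ∧ ∀ ε : ℝ, 0 < ε → ∃ u : V → ℝ,
    (Function.support u).Finite ∧ DpDist G p o (fun x => f x - u x) < ENNReal.ofReal ε

/-- The `p`-Laplacian `Δ_p h (x) = Σ_{y ∈ N_x} |h(y)-h(x)|^{p-2}(h(y)-h(x))`. -/
noncomputable def pLap (G : SimpleGraph V) (p : ℝ) (h : V → ℝ) (x : V) : ℝ :=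
  ∑' y : V, if G.Adj x y then |h y - h x| ^ (p-2) * (h y - h x) else 0

/-- `h` is `p`-harmonic on all of `V`. -/
def PHarmonic (G : SimpleGraph V) (p : ℝ) (h : V → ℝ) : Prop :=
  ∀ x, pLap G p h x = 0

/-- The pairing `⟨Δ_p h, f⟩ = Σ_x Σ_{y ∈ N_x} |h(y)-h(x)|^{p-2}(h(y)-h(x))(f(y)-f(x))`. -/
noncomputable def pPair (G : SimpleGraph V) (p : ℝ) (h f : V → ℝ) : ℝ :=
  ∑' x : V, ∑' y : V,
    if G.Adj x y then |h y - h x| ^ (p-2) * (h y - h x) * (f y - f x) else 0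


open MeasureTheory in
/-- Minkowski's inequality for `tsum` in `ℝ≥0∞`. -/
lemma tsum_Lp_add_le' {ι : Type*} (u v : ι → ℝ≥0∞) {p : ℝ} (hp : 1 ≤ p) :
    (∑' i, (u i + v i) ^ p) ^ (1/p) ≤ (∑' i, u i ^ p) ^ (1/p) + (∑' i, v i ^ p) ^ (1/p) := by
  letI : MeasurableSpace ι := ⊤
  haveI : MeasurableSingletonClass ι := ⟨fun _ => MeasurableSpace.measurableSet_top⟩
  have := ENNReal.lintegral_Lp_add_le (μ := Measure.count)
    (f := u) (g := v) measurable_from_top.aemeasurable measurable_from_top.aemeasurable hp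
  simpa [lintegral_count] using this

/-- `Ip` as a sum over pairs. -/
lemma Ip_eq_tsum_prod (G : SimpleGraph V) (p : ℝ) (f : V → ℝ) :
    Ip G p f = ∑' z : V × V,
      (if G.Adj z.1 z.2 then ENNReal.ofReal (|f z.2 - f z.1| ^ p) else 0) :=
  (ENNReal.tsum_prod).symm

theorem stmt1 [Countable V] [Infinite V] (G : SimpleGraph V) (k : ℕ)
    (hG : G.Connected) (hk : BoundedDegree G k) (p : ℝ) (hp : 1 < p)
    (f h : V → ℝ) (hf : MemBDp G p f) (hh : MemBDp G p h) :
    MemBDp G p (fun x => f x * h x) ∧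
    BDpNorm G p (fun x => f x * h x) ≤ BDpNorm G p f * BDpNorm G p h := by
  classical
  obtain ⟨⟨Cf, hCf⟩, hfI⟩ := hf
  obtain ⟨⟨Ch, hCh⟩, hhI⟩ := hh
  have hp0 : (0:ℝ) < p := lt_trans one_pos hp
  have hp0' : p ≠ 0 := ne_of_gt hp0
  have hinvp : (0:ℝ) < 1/p := by positivity
  haveI : Nonempty V := inferInstance
  set Mf : ℝ := ⨆ x, |f x| with hMfdef
  set Mh : ℝ := ⨆ x, |h x| with hMhdef
  have hbf : BddAbove (Set.range fun x => |f x|) := ⟨Cf, by rintro _ ⟨x, rfl⟩; exact hCf x⟩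
  have hbh : BddAbove (Set.range fun x => |h x|) := ⟨Ch, by rintro _ ⟨x, rfl⟩; exact hCh x⟩
  have hMf : ∀ x, |f x| ≤ Mf := fun x => le_ciSup hbf x
  have hMh : ∀ x, |h x| ≤ Mh := fun x => le_ciSup hbh x
  have hMf0 : 0 ≤ Mf := le_trans (abs_nonneg _) (hMf (Classical.arbitrary V))
  have hMh0 : 0 ≤ Mh := le_trans (abs_nonneg _) (hMh (Classical.arbitrary V))
  -- the two dominating functions on pairs
  set u : V × V → ℝ≥0∞ := fun z =>
    if G.Adj z.1 z.2 then ENNReal.ofReal (Mf * |h z.2 - h z.1|) else 0 with hu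
  set v : V × V → ℝ≥0∞ := fun z =>
    if G.Adj z.1 z.2 then ENNReal.ofReal (Mh * |f z.2 - f z.1|) else 0 with hv
  -- pointwise bound
  have hpt : ∀ z : V × V,
      (if G.Adj z.1 z.2 then ENNReal.ofReal (|f z.2 * h z.2 - f z.1 * h z.1| ^ p) else 0)
        ≤ (u z + v z) ^ p := by
    intro z
    by_cases hadj : G.Adj z.1 z.2
    · simp only [hu, hv, hadj, if_true]
      have h1 : |f z.2 * h z.2 - f z.1 * h z.1|
          ≤ Mf * |h z.2 - h z.1| + Mh * |f z.2 - f z.1| := by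
        have : f z.2 * h z.2 - f z.1 * h z.1
            = f z.2 * (h z.2 - h z.1) + h z.1 * (f z.2 - f z.1) := by ring
        rw [this]
        refine le_trans (abs_add_le _ _) (add_le_add ?_ ?_)
        · rw [abs_mul]
          exact mul_le_mul_of_nonneg_right (hMf _) (abs_nonneg _)
        · rw [abs_mul]
          exact mul_le_mul_of_nonneg_right (hMh _) (abs_nonneg _)
      have h2 : |f z.2 * h z.2 - f z.1 * h z.1| ^ p
          ≤ (Mf * |h z.2 - h z.1| + Mh * |f z.2 - f z.1|) ^ p :=
        Real.rpow_le_rpow (abs_nonneg _) h1 hp0.le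
      calc ENNReal.ofReal (|f z.2 * h z.2 - f z.1 * h z.1| ^ p)
          ≤ ENNReal.ofReal ((Mf * |h z.2 - h z.1| + Mh * |f z.2 - f z.1|) ^ p) :=
            ENNReal.ofReal_le_ofReal h2
        _ = (ENNReal.ofReal (Mf * |h z.2 - h z.1|) + ENNReal.ofReal (Mh * |f z.2 - f z.1|)) ^ p := by
            rw [← ENNReal.ofReal_add (by positivity) (by positivity),
              ENNReal.ofReal_rpow_of_nonneg (by positivity) hp0.le]
    · simp [hadj]
  -- sums of u^p and v^p
  have hup : ∑' z, u z ^ p = ENNReal.ofReal Mf ^ p * Ip G p h := by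
    rw [Ip_eq_tsum_prod, ← ENNReal.tsum_mul_left]
    refine tsum_congr fun z => ?_
    by_cases hadj : G.Adj z.1 z.2
    · simp only [hu, hadj, if_true]
      rw [ENNReal.ofReal_mul hMf0, ENNReal.mul_rpow_of_nonneg _ _ hp0.le,
        ENNReal.ofReal_rpow_of_nonneg (abs_nonneg _) hp0.le]
    · simp [hu, hadj, ENNReal.zero_rpow_of_pos hp0]
  have hvp : ∑' z, v z ^ p = ENNReal.ofReal Mh ^ p * Ip G p f := by
    rw [Ip_eq_tsum_prod, ← ENNReal.tsum_mul_left]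
    refine tsum_congr fun z => ?_
    by_cases hadj : G.Adj z.1 z.2
    · simp only [hv, hadj, if_true]
      rw [ENNReal.ofReal_mul hMh0, ENNReal.mul_rpow_of_nonneg _ _ hp0.le,
        ENNReal.ofReal_rpow_of_nonneg (abs_nonneg _) hp0.le]
    · simp [hv, hadj, ENNReal.zero_rpow_of_pos hp0]
  -- key ENNReal inequality
  have hkey : Ip G p (fun x => f x * h x) ^ (1/p)
      ≤ ENNReal.ofReal Mf * Ip G p h ^ (1/p) + ENNReal.ofReal Mh * Ip G p f ^ (1/p) := by
    have step1 : Ip G p (fun x => f x * h x) ≤ ∑' z : V × V, (u z + v z) ^ p := by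
      rw [Ip_eq_tsum_prod]
      exact ENNReal.tsum_le_tsum hpt
    have step2 := tsum_Lp_add_le' u v hp.le
    have e1 : (∑' z, u z ^ p) ^ (1/p) = ENNReal.ofReal Mf * Ip G p h ^ (1/p) := by
      rw [hup, ENNReal.mul_rpow_of_nonneg _ _ hinvp.le, ← ENNReal.rpow_mul, mul_one_div,
        div_self hp0', ENNReal.rpow_one]
    have e2 : (∑' z, v z ^ p) ^ (1/p) = ENNReal.ofReal Mh * Ip G p f ^ (1/p) := by
      rw [hvp, ENNReal.mul_rpow_of_nonneg _ _ hinvp.le, ← ENNReal.rpow_mul, mul_one_div,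
        div_self hp0', ENNReal.rpow_one]
    calc Ip G p (fun x => f x * h x) ^ (1/p)
        ≤ (∑' z : V × V, (u z + v z) ^ p) ^ (1/p) :=
          ENNReal.rpow_le_rpow step1 hinvp.le
      _ ≤ (∑' z, u z ^ p) ^ (1/p) + (∑' z, v z ^ p) ^ (1/p) := step2
      _ = _ := by rw [e1, e2]
    -- done
  have hRHSne : ENNReal.ofReal Mf * Ip G p h ^ (1/p) + ENNReal.ofReal Mh * Ip G p f ^ (1/p) ≠ ⊤ := by
    refine ENNReal.add_ne_top.2 ⟨ENNReal.mul_ne_top ENNReal.ofReal_ne_top ?_,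
      ENNReal.mul_ne_top ENNReal.ofReal_ne_top ?_⟩
    · exact ENNReal.rpow_ne_top_of_nonneg hinvp.le hhI
    · exact ENNReal.rpow_ne_top_of_nonneg hinvp.le hfI
  have hIne : Ip G p (fun x => f x * h x) ≠ ⊤ := by
    intro htop
    rw [htop, ENNReal.top_rpow_of_pos hinvp] at hkey
    exact hRHSne (top_le_iff.mp hkey)
  have hmem : MemBDp G p (fun x => f x * h x) :=
    ⟨⟨Cf * Ch, fun x => by
      rw [abs_mul]
      exact mul_le_mul (hCf x) (hCh x) (abs_nonneg _)
        (le_trans (abs_nonneg _) (hCf x))⟩, hIne⟩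
  refine ⟨hmem, ?_⟩
  -- real-valued consequences
  have hreal : (Ip G p (fun x => f x * h x)).toReal ^ (1/p)
      ≤ Mf * (Ip G p h).toReal ^ (1/p) + Mh * (Ip G p f).toReal ^ (1/p) := by
    have := ENNReal.toReal_mono hRHSne hkey
    rwa [ENNReal.toReal_add (ENNReal.mul_ne_top ENNReal.ofReal_ne_top
        (ENNReal.rpow_ne_top_of_nonneg hinvp.le hhI))
        (ENNReal.mul_ne_top ENNReal.ofReal_ne_top (ENNReal.rpow_ne_top_of_nonneg hinvp.le hfI)),
      ENNReal.toReal_mul, ENNReal.toReal_mul, ENNReal.toReal_ofReal hMf0,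
      ENNReal.toReal_ofReal hMh0, ← ENNReal.toReal_rpow, ← ENNReal.toReal_rpow,
      ← ENNReal.toReal_rpow] at this
  have hsup : (⨆ x, |f x * h x|) ≤ Mf * Mh := by
    refine ciSup_le fun x => ?_
    rw [abs_mul]
    exact mul_le_mul (hMf x) (hMh x) (abs_nonneg _) hMf0
  have hA0 : 0 ≤ (Ip G p f).toReal ^ (1/p) := Real.rpow_nonneg ENNReal.toReal_nonneg _
  have hB0 : 0 ≤ (Ip G p h).toReal ^ (1/p) := Real.rpow_nonneg ENNReal.toReal_nonneg _
  unfold BDpNorm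
  simp only
  nlinarith [mul_nonneg hA0 hB0, hreal, hsup, hA0, hB0, hMf0, hMh0]
end

section
/- Let G be a connected graph of bounded degree, p > 1, and let f₁, f₂ ∈ D_p(G). Then ⟨Δ_p f₁ − Δ_p f₂, f₁ − f₂⟩ = 0 if and only if f₁ − f₂ is constant on V, where ⟨Δ_p h, f⟩ = Σ_{x∈V} Σ_{y∈N_x} |h(y)−h(x)|^{p−2}(h(y)−h(x))(f(y)−f(x)). -/
open scoped ENNReal Classical

variable {V : Type*}

private lemma phi_key {p : ℝ} (hp : 1 < p) : ∀ s : ℝ, 0 ≤ s → |s| ^ (p-2) * s = s ^ (p-1) := by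
  intro s hs
  rcases eq_or_lt_of_le hs with h|h
  · simp [← h, Real.zero_rpow (by linarith : p - 1 ≠ 0)]
  · rw [abs_of_pos h, ← Real.rpow_add_one h.ne']; ring_nf

private lemma phi_strictMono {p : ℝ} (hp : 1 < p) :
    StrictMono (fun s : ℝ => |s| ^ (p-2) * s) := by
  have h1 : (0:ℝ) < p - 1 := by linarith
  intro u v huv
  simp only
  rcases le_or_gt 0 u with hu | hu
  · rw [phi_key hp u hu, phi_key hp v (hu.trans huv.le)]
    exact Real.rpow_lt_rpow hu huv h1
  · rcases le_or_gt v 0 with hv | hv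
    · have e1 := phi_key hp (-u) (by linarith)
      have e2 := phi_key hp (-v) (by linarith)
      rw [abs_neg] at e1 e2
      have hlt : (-v) ^ (p-1) < (-u) ^ (p-1) :=
        Real.rpow_lt_rpow (by linarith) (by linarith) h1
      nlinarith [e1, e2]
    · have hvpos : 0 < |v| ^ (p-2) * v :=
        mul_pos (Real.rpow_pos_of_pos (abs_pos.mpr hv.ne') _) hv
      have hun : |u| ^ (p-2) * u < 0 :=
        mul_neg_of_pos_of_neg (Real.rpow_pos_of_pos (abs_pos.mpr hu.ne) _) hu
      linarith

private lemma pair_nonneg {p : ℝ} (hp : 1 < p) (s t : ℝ) :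
    0 ≤ (|s| ^ (p-2) * s - |t| ^ (p-2) * t) * (s - t) := by
  rcases lt_trichotomy s t with h|h|h
  · have := phi_strictMono hp h; simp only at this; nlinarith
  · simp [h]
  · have := phi_strictMono hp h; simp only at this; nlinarith

private lemma pair_eq_zero {p : ℝ} (hp : 1 < p) {s t : ℝ}
    (h : (|s| ^ (p-2) * s - |t| ^ (p-2) * t) * (s - t) = 0) : s = t := by
  rcases lt_trichotomy s t with h'|h'|h'
  · have := phi_strictMono hp h'; simp only at this; nlinarith
  · exact h'
  · have := phi_strictMono hp h'; simp only at this; nlinarith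

private lemma phi_abs {p : ℝ} (hp : 1 < p) (s : ℝ) :
    |(|s| ^ (p-2) * s)| = |s| ^ (p-1) := by
  rcases eq_or_ne s 0 with h|h
  · simp [h, Real.zero_rpow (by linarith : p - 1 ≠ 0)]
  · rw [abs_mul, abs_of_nonneg (Real.rpow_nonneg (abs_nonneg s) _),
      ← Real.rpow_add_one (abs_ne_zero.mpr h)]
    ring_nf

private lemma crude_bound {p : ℝ} (hp : 1 < p) (s d : ℝ) :
    |s| ^ (p-1) * |d| ≤ |s| ^ p + |d| ^ p := by
  have h1 : (0:ℝ) < p - 1 := by linarith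
  have key : ∀ x : ℝ, 0 ≤ x → x ^ (p-1) * x = x ^ p := by
    intro x hx
    rcases eq_or_lt_of_le hx with h|h
    · simp [← h, Real.zero_rpow (by linarith : p ≠ 0)]
    · rw [← Real.rpow_add_one h.ne']; ring_nf
  rcases le_total |s| |d| with h|h
  · have h2 : |s| ^ (p-1) * |d| ≤ |d| ^ (p-1) * |d| :=
      mul_le_mul_of_nonneg_right (Real.rpow_le_rpow (abs_nonneg s) h h1.le) (abs_nonneg d)
    rw [key _ (abs_nonneg d)] at h2
    have := Real.rpow_nonneg (abs_nonneg s) p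
    linarith
  · have h2 : |s| ^ (p-1) * |d| ≤ |s| ^ (p-1) * |s| :=
      mul_le_mul_of_nonneg_left h (Real.rpow_nonneg (abs_nonneg s) _)
    rw [key _ (abs_nonneg s)] at h2
    have := Real.rpow_nonneg (abs_nonneg d) p
    linarith

private lemma sub_rpow_le {p : ℝ} (hp : 1 < p) (s t : ℝ) :
    |s - t| ^ p ≤ 2 ^ p * (|s| ^ p + |t| ^ p) := by
  have hm : |s - t| ≤ 2 * max |s| |t| := by
    have h := abs_sub s t
    have := le_max_left |s| |t|; have := le_max_right |s| |t|
    linarith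
  have h2 : |s - t| ^ p ≤ (2 * max |s| |t|) ^ p :=
    Real.rpow_le_rpow (abs_nonneg _) hm (by linarith)
  rw [Real.mul_rpow (by norm_num) (le_max_of_le_left (abs_nonneg s))] at h2
  have hmax : (max |s| |t|) ^ p ≤ |s| ^ p + |t| ^ p := by
    rcases max_cases |s| |t| with ⟨h', _⟩ | ⟨h', _⟩ <;> rw [h']
    · exact le_add_of_nonneg_right (Real.rpow_nonneg (abs_nonneg t) p)
    · exact le_add_of_nonneg_left (Real.rpow_nonneg (abs_nonneg s) p)
  calc |s - t| ^ p ≤ 2 ^ p * (max |s| |t|) ^ p := h2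
    _ ≤ 2 ^ p * (|s| ^ p + |t| ^ p) :=
        mul_le_mul_of_nonneg_left hmax (Real.rpow_nonneg (by norm_num) p)

private lemma summable_of_ofReal_ne_top {α : Type*} {F : α → ℝ} (hF : ∀ z, 0 ≤ F z)
    (h : ∑' z, ENNReal.ofReal (F z) ≠ ⊤) : Summable F := by
  have h2 : Summable fun z => (F z).toNNReal := ENNReal.tsum_coe_ne_top_iff_summable.mp h
  have h3 : Summable fun z => ((F z).toNNReal : ℝ) := NNReal.summable_coe.mpr h2
  have he : (fun z => ((F z).toNNReal : ℝ)) = F := by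
    funext z; exact Real.coe_toNNReal _ (hF z)
  rwa [he] at h3

/-- the `I_p` integrand as a function on pairs -/
private noncomputable def Fip (G : SimpleGraph V) (p : ℝ) (h : V → ℝ) (z : V × V) : ℝ :=
  if G.Adj z.1 z.2 then |h z.2 - h z.1| ^ p else 0

/-- the pairing integrand as a function on pairs -/
private noncomputable def Tpair (G : SimpleGraph V) (p : ℝ) (h g : V → ℝ) (z : V × V) : ℝ :=
  if G.Adj z.1 z.2 then |h z.2 - h z.1| ^ (p-2) * (h z.2 - h z.1) * (g z.2 - g z.1) else 0

private lemma Fip_nonneg (G : SimpleGraph V) (p : ℝ) (h : V → ℝ) (z : V × V) :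
    0 ≤ Fip G p h z := by
  rw [Fip]; split
  · exact Real.rpow_nonneg (abs_nonneg _) p
  · exact le_refl 0

private lemma Ip_eq (G : SimpleGraph V) (p : ℝ) (h : V → ℝ) :
    Ip G p h = ∑' z : V × V, ENNReal.ofReal (Fip G p h z) := by
  rw [Ip,
    ← ENNReal.tsum_prod (f := fun x y => if G.Adj x y then ENNReal.ofReal (|h y - h x| ^ p) else 0)]
  apply tsum_congr; intro z
  rw [Fip]; split <;> simp

private lemma summable_Fip (G : SimpleGraph V) (p : ℝ) (h : V → ℝ) (hfin : Ip G p h ≠ ⊤) :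
    Summable (Fip G p h) := by
  apply summable_of_ofReal_ne_top (Fip_nonneg G p h)
  rwa [Ip_eq] at hfin

private lemma summable_Tpair {G : SimpleGraph V} {p : ℝ} (hp : 1 < p) {h g : V → ℝ}
    (hh : Summable (Fip G p h)) (hg : Summable (Fip G p g)) :
    Summable (Tpair G p h g) := by
  apply Summable.of_abs
  apply Summable.of_nonneg_of_le (fun z => abs_nonneg _)
    (f := fun z => Fip G p h z + Fip G p g z) _ (hh.add hg)
  intro z
  simp only [Tpair, Fip]
  split
  · rw [abs_mul, phi_abs hp]
    exact crude_bound hp _ _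
  · simp

private lemma pPair_eq {G : SimpleGraph V} {p : ℝ} {h g : V → ℝ}
    (hs : Summable (Tpair G p h g)) :
    pPair G p h g = ∑' z : V × V, Tpair G p h g z := by
  rw [pPair, Summable.tsum_prod' hs hs.prod_factor]
  rfl

theorem stmt3 [Countable V] [Infinite V] (G : SimpleGraph V) (k : ℕ)
    (hG : G.Connected) (hk : BoundedDegree G k) (p : ℝ) (hp : 1 < p)
    (f₁ f₂ : V → ℝ) (hf₁ : Ip G p f₁ ≠ ⊤) (hf₂ : Ip G p f₂ ≠ ⊤) :
    pPair G p f₁ (fun x => f₁ x - f₂ x) - pPair G p f₂ (fun x => f₁ x - f₂ x) = 0 ↔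
      ∃ c : ℝ, ∀ x, f₁ x - f₂ x = c := by
  set g : V → ℝ := fun x => f₁ x - f₂ x with hgdef
  have hS1 : Summable (Fip G p f₁) := summable_Fip G p f₁ hf₁
  have hS2 : Summable (Fip G p f₂) := summable_Fip G p f₂ hf₂
  have hSg : Summable (Fip G p g) := by
    apply Summable.of_nonneg_of_le (Fip_nonneg G p g)
      (f := fun z => 2 ^ p * (Fip G p f₁ z + Fip G p f₂ z)) _
      (((hS1.add hS2).mul_left _))
    intro z
    simp only [Fip]
    split
    · have : g z.2 - g z.1 = (f₁ z.2 - f₁ z.1) - (f₂ z.2 - f₂ z.1) := by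
        simp only [hgdef]; ring
      rw [this]
      exact sub_rpow_le hp _ _
    · simp [Real.rpow_nonneg]
  have hT1 : Summable (Tpair G p f₁ g) := summable_Tpair hp hS1 hSg
  have hT2 : Summable (Tpair G p f₂ g) := summable_Tpair hp hS2 hSg
  have hdiff_nonneg : ∀ z, 0 ≤ Tpair G p f₁ g z - Tpair G p f₂ g z := by
    intro z
    simp only [Tpair]
    split
    · have hd : g z.2 - g z.1 = (f₁ z.2 - f₁ z.1) - (f₂ z.2 - f₂ z.1) := by
        simp only [hgdef]; ring
      rw [hd]
      have := pair_nonneg hp (f₁ z.2 - f₁ z.1) (f₂ z.2 - f₂ z.1)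
      nlinarith [this]
    · simp
  have hLHS : pPair G p f₁ g - pPair G p f₂ g
      = ∑' z : V × V, (Tpair G p f₁ g z - Tpair G p f₂ g z) := by
    rw [pPair_eq hT1, pPair_eq hT2, Summable.tsum_sub hT1 hT2]
  constructor
  · intro h0
    rw [hLHS] at h0
    have hzero : ∀ z : V × V, Tpair G p f₁ g z - Tpair G p f₂ g z = 0 := by
      intro z
      by_contra hne
      have hpos : 0 < Tpair G p f₁ g z - Tpair G p f₂ g z :=
        lt_of_le_of_ne (hdiff_nonneg z) (Ne.symm hne)
      have := Summable.tsum_pos (hT1.sub hT2) hdiff_nonneg z hpos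
      rw [h0] at this
      exact lt_irrefl 0 this
    have key : ∀ x y : V, G.Adj x y → g y = g x := by
      intro x y hxy
      have hD := hzero (x, y)
      simp only [Tpair] at hD
      simp only [if_pos hxy] at hD
      have hd : g y - g x = (f₁ y - f₁ x) - (f₂ y - f₂ x) := by
        simp only [hgdef]; ring
      have hprod : (|f₁ y - f₁ x| ^ (p-2) * (f₁ y - f₁ x)
          - |f₂ y - f₂ x| ^ (p-2) * (f₂ y - f₂ x)) * ((f₁ y - f₁ x) - (f₂ y - f₂ x)) = 0 := by
        rw [← hd]; linarith [hD]
      have hst := pair_eq_zero hp hprod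
      have : g y - g x = 0 := by rw [hd, hst]; ring
      linarith
    have const : ∀ x y : V, g x = g y := by
      intro x y
      obtain ⟨w⟩ := hG.preconnected x y
      induction w with
      | nil => rfl
      | cons h w ih => rw [← key _ _ h]; exact ih
    obtain ⟨x₀⟩ := (inferInstance : Nonempty V)
    exact ⟨g x₀, fun x => const x x₀⟩
  · rintro ⟨c, hc⟩
    have hz : ∀ h : V → ℝ, pPair G p h g = 0 := by
      intro h
      rw [pPair]
      have he : ∀ x y : V,
          (if G.Adj x y then |h y - h x| ^ (p-2) * (h y - h x) * (g y - g x) else 0) = 0 := by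
        intro x y
        split
        · have : g y - g x = 0 := by simp only [hgdef]; rw [hc y, hc x]; ring
          rw [this, mul_zero]
        · rfl
      simp only [he, tsum_zero]
    rw [hz f₁, hz f₂, sub_zero]
end

section
/- Let G be a connected graph of bounded degree and p > 1. The map i : V → Sp(BD_p(G)) defined by (i(x))(f) = f(x) is injective, and the Banach algebra BD_p(G) is semisimple (for every nonzero f ∈ BD_p(G) there is a character τ with τ(f) ≠ 0). -/
open scoped ENNReal Classical

variable {V : Type*}

/-- A character of the commutative Banach algebra `BD_p(G)`: a nonzero multiplicative
linear functional (characters are automatically norm-bounded). -/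
structure BDpChar (G : SimpleGraph V) (p : ℝ) where
  toFun : (V → ℝ) → ℝ
  map_add : ∀ f g, MemBDp G p f → MemBDp G p g →
    toFun (fun x => f x + g x) = toFun f + toFun g
  map_mul : ∀ f g, MemBDp G p f → MemBDp G p g →
    toFun (fun x => f x * g x) = toFun f * toFun g
  map_smul : ∀ (c : ℝ) f, MemBDp G p f → toFun (fun x => c * f x) = c * toFun f
  bound : ∀ f, MemBDp G p f → |toFun f| ≤ BDpNorm G p f
  nonzero : ∃ f, MemBDp G p f ∧ toFun f ≠ 0

/-- `τ` belongs to the `p`-harmonic boundary `∂_p(G)`: it is not evaluation at any vertex,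
and it annihilates `B(\overline{ℝG})_{D_p}`. -/
def InPBoundary (G : SimpleGraph V) (p : ℝ) (o : V) (τ : BDpChar G p) : Prop :=
  (∀ x : V, ∃ f, MemBDp G p f ∧ τ.toFun f ≠ f x) ∧
  (∀ f, BRClos G p o f → τ.toFun f = 0)

/-- The constant function 1 is in `BD_p`. -/
lemma memBDp_one (G : SimpleGraph V) (p : ℝ) (hp : 1 < p) :
    MemBDp G p (fun _ => (1 : ℝ)) := by
  constructor
  · exact ⟨1, fun x => by simp⟩
  · have hIp : Ip G p (fun _ => (1:ℝ)) = 0 := by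
      unfold Ip
      have : ∀ x y : V,
          (if G.Adj x y then ENNReal.ofReal (|(1:ℝ) - 1| ^ p) else 0) = 0 := by
        intro x y
        split
        · rw [sub_self, abs_zero, Real.zero_rpow (by linarith), ENNReal.ofReal_zero]
        · rfl
      simp only [this, tsum_zero]
    rw [hIp]; exact ENNReal.zero_ne_top

/-- The indicator of a single vertex is in `BD_p` when degrees are bounded. -/
lemma memBDp_indicator (G : SimpleGraph V) (k : ℕ) (hk : BoundedDegree G k)
    (p : ℝ) (hp : 1 < p) (x : V) :
    MemBDp G p (fun v => if v = x then (1 : ℝ) else 0) := by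
  set f : V → ℝ := fun v => if v = x then (1 : ℝ) else 0 with hf
  constructor
  · refine ⟨1, fun v => ?_⟩
    by_cases h : v = x <;> simp [f, h]
  · set F : V × V → ℝ≥0∞ :=
      fun q => if G.Adj q.1 q.2 then ENNReal.ofReal (|f q.2 - f q.1| ^ p) else 0 with hF
    have hprod : Ip G p f = ∑' q : V × V, F q := by
      unfold Ip
      exact (ENNReal.tsum_prod).symm
    have hfin := (hk x).1
    classical
    set s : Finset V := hfin.toFinset with hs
    set S : Finset (V × V) := s.image (fun b => (x, b)) ∪ s.image (fun a => (a, x)) with hS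
    have hzero : ∀ q ∉ S, F q = 0 := by
      rintro ⟨a, b⟩ hq
      simp only [hF]
      split
      · rename_i hadj
        have ha : a ≠ x := by
          rintro rfl
          apply hq
          rw [hS]
          apply Finset.mem_union_left
          exact Finset.mem_image.2 ⟨b, by simp [hs, hfin.mem_toFinset, hadj], rfl⟩
        have hb : b ≠ x := by
          rintro rfl
          apply hq
          rw [hS]
          apply Finset.mem_union_right
          exact Finset.mem_image.2 ⟨a, by simp [hs, hfin.mem_toFinset, hadj.symm], rfl⟩
        simp only [f, if_neg ha, if_neg hb]
        rw [sub_self, abs_zero, Real.zero_rpow (by linarith), ENNReal.ofReal_zero]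
      · rfl
    rw [hprod, tsum_eq_sum hzero]
    refine (ENNReal.sum_lt_top.2 fun q _ => ?_).ne
    simp only [hF]
    split
    · exact ENNReal.ofReal_lt_top
    · exact ENNReal.zero_lt_top

/-- Evaluation at a vertex is a character of `BD_p(G)`. -/
noncomputable def evalChar (G : SimpleGraph V) (p : ℝ) (hp : 1 < p) (x : V) :
    BDpChar G p where
  toFun f := f x
  map_add _ _ _ _ := rfl
  map_mul _ _ _ _ := rfl
  map_smul _ _ _ := rfl
  bound f hf := by
    obtain ⟨M, hM⟩ := hf.1
    have hbdd : BddAbove (Set.range fun v => |f v|) :=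
      ⟨M, by rintro r ⟨v, rfl⟩; exact hM v⟩
    have h1 : |f x| ≤ ⨆ v, |f v| := le_ciSup hbdd x
    have h2 : (0 : ℝ) ≤ (Ip G p f).toReal ^ (1/p) :=
      Real.rpow_nonneg ENNReal.toReal_nonneg _
    unfold BDpNorm
    linarith
  nonzero := ⟨fun _ => 1, memBDp_one G p hp, one_ne_zero⟩

theorem stmt8 [Countable V] [Infinite V] (G : SimpleGraph V) (k : ℕ)
    (hG : G.Connected) (hk : BoundedDegree G k) (p : ℝ) (hp : 1 < p) :
    (∀ x y : V, (∀ f : V → ℝ, MemBDp G p f → f x = f y) → x = y) ∧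
    (∀ f : V → ℝ, MemBDp G p f → f ≠ 0 → ∃ τ : BDpChar G p, τ.toFun f ≠ 0) := by
  constructor
  · intro x y h
    by_contra hxy
    have := h _ (memBDp_indicator G k hk p hp x)
    simp only [if_pos rfl, if_neg (Ne.symm hxy)] at this
    norm_num at this
  · intro f hf hne
    obtain ⟨x, hx⟩ : ∃ x, f x ≠ 0 := by
      by_contra h
      push_neg at h
      exact hne (funext h)
    exact ⟨evalChar G p hp x, hx⟩
end

section
/- Let G be a connected graph of bounded degree and p > 1. The p-harmonic boundary ∂_p(G) is empty if and only if G is p-parabolic (i.e. 1_V lies in the D_p-closure of the bounded finitely supported functions). -/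
open scoped ENNReal Classical

variable {V : Type*}

section AuxLemmas

variable (G : SimpleGraph V) (p : ℝ) (o : V)

lemma Ip_const (hp : p ≠ 0) (c : ℝ) : Ip G p (fun _ => c) = 0 := by
  simp [Ip, Real.zero_rpow hp]

lemma memBDp_const (hp : p ≠ 0) (c : ℝ) : MemBDp G p (fun _ => c) := by
  refine ⟨⟨|c|, fun x => le_rfl⟩, ?_⟩
  rw [Ip_const G p hp]
  exact ENNReal.zero_ne_top

lemma ofReal_abs_rpow_le {p : ℝ} (hp : 0 < p) {L a b : ℝ} (hL : 0 ≤ L) (h : |a| ≤ L * |b|) :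
    ENNReal.ofReal (|a| ^ p) ≤ ENNReal.ofReal (L ^ p) * ENNReal.ofReal (|b| ^ p) := by
  rw [← ENNReal.ofReal_mul (Real.rpow_nonneg hL p), ← Real.mul_rpow hL (abs_nonneg b)]
  exact ENNReal.ofReal_le_ofReal (Real.rpow_le_rpow (abs_nonneg a) h hp.le)

lemma Ip_le_mul {K : ℝ≥0∞} {a b : V → ℝ}
    (h : ∀ x y, G.Adj x y →
      ENNReal.ofReal (|a y - a x| ^ p) ≤ K * ENNReal.ofReal (|b y - b x| ^ p)) :
    Ip G p a ≤ K * Ip G p b := by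
  unfold Ip
  rw [← ENNReal.tsum_mul_left]
  refine ENNReal.tsum_le_tsum fun x => ?_
  rw [← ENNReal.tsum_mul_left]
  refine ENNReal.tsum_le_tsum fun y => ?_
  by_cases hxy : G.Adj x y
  · simpa [hxy] using h x y hxy
  · simp [hxy]

lemma DpDist_le_mul {p : ℝ} (hp : 0 < p) {L : ℝ} (hL : 0 ≤ L) {a b : V → ℝ}
    (he : ∀ x y, |a y - a x| ≤ L * |b y - b x|) (ho : |a o| ≤ L * |b o|) :
    DpDist G p o a ≤ ENNReal.ofReal (L ^ p) * DpDist G p o b := by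
  unfold DpDist
  rw [mul_add]
  exact add_le_add (Ip_le_mul G p (fun x y _ => ofReal_abs_rpow_le hp hL (he x y)))
    (ofReal_abs_rpow_le hp hL ho)

lemma abs_add_rpow_le {p : ℝ} (hp : 0 < p) (u v : ℝ) :
    |u + v| ^ p ≤ 2 ^ p * |u| ^ p + 2 ^ p * |v| ^ p := by
  have h1 : |u + v| ≤ 2 * max |u| |v| := by
    calc |u + v| ≤ |u| + |v| := abs_add_le u v
      _ ≤ 2 * max |u| |v| := by
          have := le_max_left |u| |v|
          have := le_max_right |u| |v|
          linarith
  have h2 : |u + v| ^ p ≤ (2 * max |u| |v|) ^ p :=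
    Real.rpow_le_rpow (abs_nonneg _) h1 hp.le
  have h3 : (2 * max |u| |v|) ^ p = 2 ^ p * (max |u| |v|) ^ p :=
    Real.mul_rpow (by norm_num) (le_max_of_le_left (abs_nonneg u))
  have h4 : (max |u| |v|) ^ p ≤ |u| ^ p + |v| ^ p := by
    rcases max_cases |u| |v| with ⟨h, _⟩ | ⟨h, _⟩ <;> rw [h]
    · have := Real.rpow_nonneg (abs_nonneg v) p; linarith
    · have := Real.rpow_nonneg (abs_nonneg u) p; linarith
  have h2p : (0:ℝ) ≤ 2 ^ p := Real.rpow_nonneg (by norm_num) p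
  calc |u + v| ^ p ≤ 2 ^ p * (max |u| |v|) ^ p := h3 ▸ h2
    _ ≤ 2 ^ p * (|u| ^ p + |v| ^ p) := by
        exact mul_le_mul_of_nonneg_left h4 h2p
    _ = 2 ^ p * |u| ^ p + 2 ^ p * |v| ^ p := by ring

lemma ofReal_abs_add_le {p : ℝ} (hp : 0 < p) (u v : ℝ) :
    ENNReal.ofReal (|u + v| ^ p) ≤
      ENNReal.ofReal ((2:ℝ) ^ p) * ENNReal.ofReal (|u| ^ p)
        + ENNReal.ofReal ((2:ℝ) ^ p) * ENNReal.ofReal (|v| ^ p) := by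
  have h2p : (0:ℝ) ≤ 2 ^ p := Real.rpow_nonneg (by norm_num) p
  rw [← ENNReal.ofReal_mul h2p, ← ENNReal.ofReal_mul h2p,
    ← ENNReal.ofReal_add (mul_nonneg h2p (Real.rpow_nonneg (abs_nonneg u) p))
      (mul_nonneg h2p (Real.rpow_nonneg (abs_nonneg v) p))]
  exact ENNReal.ofReal_le_ofReal (abs_add_rpow_le hp u v)

lemma Ip_add_le {p : ℝ} (hp : 0 < p) (a b : V → ℝ) :
    Ip G p (fun x => a x + b x) ≤
      ENNReal.ofReal ((2:ℝ) ^ p) * Ip G p a + ENNReal.ofReal ((2:ℝ) ^ p) * Ip G p b := by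
  unfold Ip
  rw [← ENNReal.tsum_mul_left, ← ENNReal.tsum_mul_left, ← ENNReal.tsum_add]
  refine ENNReal.tsum_le_tsum fun x => ?_
  rw [← ENNReal.tsum_mul_left, ← ENNReal.tsum_mul_left, ← ENNReal.tsum_add]
  refine ENNReal.tsum_le_tsum fun y => ?_
  by_cases hxy : G.Adj x y
  · simp only [hxy, if_true]
    have h1 : (a y + b y) - (a x + b x) = (a y - a x) + (b y - b x) := by ring
    rw [h1]
    exact ofReal_abs_add_le hp _ _
  · simp [hxy]

lemma DpDist_add_le {p : ℝ} (hp : 0 < p) (a b : V → ℝ) :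
    DpDist G p o (fun x => a x + b x) ≤
      ENNReal.ofReal ((2:ℝ) ^ p) * DpDist G p o a
        + ENNReal.ofReal ((2:ℝ) ^ p) * DpDist G p o b := by
  unfold DpDist
  calc Ip G p (fun x => a x + b x) + ENNReal.ofReal (|a o + b o| ^ p)
      ≤ (ENNReal.ofReal ((2:ℝ) ^ p) * Ip G p a + ENNReal.ofReal ((2:ℝ) ^ p) * Ip G p b)
        + (ENNReal.ofReal ((2:ℝ) ^ p) * ENNReal.ofReal (|a o| ^ p)
          + ENNReal.ofReal ((2:ℝ) ^ p) * ENNReal.ofReal (|b o| ^ p)) :=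
        add_le_add (Ip_add_le G hp a b) (ofReal_abs_add_le hp _ _)
    _ = ENNReal.ofReal ((2:ℝ) ^ p) * (Ip G p a + ENNReal.ofReal (|a o| ^ p))
        + ENNReal.ofReal ((2:ℝ) ^ p) * (Ip G p b + ENNReal.ofReal (|b o| ^ p)) := by ring

lemma brclos_add {p : ℝ} (hp : 0 < p) {f g : V → ℝ}
    (hf : BRClos G p o f) (hg : BRClos G p o g) :
    BRClos G p o (fun x => f x + g x) := by
  obtain ⟨⟨Mf, hMf⟩, hfa⟩ := hf
  obtain ⟨⟨Mg, hMg⟩, hga⟩ := hg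
  refine ⟨⟨Mf + Mg, fun x => (abs_add_le _ _).trans (add_le_add (hMf x) (hMg x))⟩, ?_⟩
  intro ε hε
  set C : ℝ := (2:ℝ) ^ p with hC
  have hCpos : 0 < C := Real.rpow_pos_of_pos (by norm_num) p
  have hδ : 0 < ε / (2 * C + 1) := by positivity
  obtain ⟨u, hu, hud⟩ := hfa _ hδ
  obtain ⟨w, hw, hwd⟩ := hga _ hδ
  refine ⟨fun x => u x + w x, ?_, ?_⟩
  · refine (hu.union hw).subset fun x hx => ?_
    have hx' : u x + w x ≠ 0 := hx
    by_contra hxn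
    simp only [Set.mem_union, Function.mem_support, not_or, not_not] at hxn
    exact hx' (by rw [hxn.1, hxn.2, add_zero])
  · have h1 : (fun x => (f x + g x) - (u x + w x)) = fun x => (f x - u x) + (g x - w x) := by
      funext x; ring
    rw [h1]
    calc DpDist G p o (fun x => (f x - u x) + (g x - w x))
        ≤ ENNReal.ofReal C * DpDist G p o (fun x => f x - u x)
          + ENNReal.ofReal C * DpDist G p o (fun x => g x - w x) := DpDist_add_le G o hp _ _
      _ ≤ ENNReal.ofReal C * ENNReal.ofReal (ε / (2 * C + 1))
          + ENNReal.ofReal C * ENNReal.ofReal (ε / (2 * C + 1)) :=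
          add_le_add (mul_le_mul_right hud.le _) (mul_le_mul_right hwd.le _)
      _ = ENNReal.ofReal (C * (ε / (2 * C + 1)) + C * (ε / (2 * C + 1))) := by
          rw [← ENNReal.ofReal_mul hCpos.le,
            ← ENNReal.ofReal_add (by positivity) (by positivity)]
      _ < ENNReal.ofReal ε := by
          rw [ENNReal.ofReal_lt_ofReal_iff hε]
          have h3 : (2 * C) * ε / (2 * C + 1) < ε := by
            rw [div_lt_iff₀ (by positivity)]
            nlinarith
          calc C * (ε / (2 * C + 1)) + C * (ε / (2 * C + 1))
              = (2 * C) * ε / (2 * C + 1) := by ring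
            _ < ε := h3

lemma brclos_comp {p : ℝ} (hp : 0 < p) {f : V → ℝ} {φ : ℝ → ℝ} {L : ℝ} (hL : 0 ≤ L)
    (hlip : ∀ a b, |φ a - φ b| ≤ L * |a - b|) (h0 : φ 0 = 0) (hf : BRClos G p o f) :
    BRClos G p o (fun x => φ (f x)) := by
  obtain ⟨⟨M, hM⟩, hfa⟩ := hf
  have hφ : ∀ t : ℝ, |φ t| ≤ L * |t| := fun t => by simpa [h0] using hlip t 0
  refine ⟨⟨L * M, fun x => (hφ _).trans (mul_le_mul_of_nonneg_left (hM x) hL)⟩, ?_⟩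
  intro ε hε
  have hLp : 0 ≤ L ^ p := Real.rpow_nonneg hL p
  have hδ : 0 < ε / (L ^ p + 1) := by positivity
  obtain ⟨u, hu, hud⟩ := hfa _ hδ
  refine ⟨fun x => φ (f x) - φ (f x - u x), ?_, ?_⟩
  · refine hu.subset fun x hx => ?_
    have hx' : φ (f x) - φ (f x - u x) ≠ 0 := hx
    by_contra hxn
    simp only [Function.mem_support, not_not] at hxn
    exact hx' (by rw [hxn, sub_zero, sub_self])
  · have h1 : (fun x => φ (f x) - (φ (f x) - φ (f x - u x))) = fun x => φ (f x - u x) := by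
      funext x; ring
    rw [h1]
    have h2 : DpDist G p o (fun x => φ (f x - u x)) ≤
        ENNReal.ofReal (L ^ p) * DpDist G p o (fun x => f x - u x) := by
      refine DpDist_le_mul G o hp hL (fun x y => hlip _ _) ?_
      simpa [h0] using hlip (f o - u o) 0
    calc DpDist G p o (fun x => φ (f x - u x))
        ≤ ENNReal.ofReal (L ^ p) * DpDist G p o (fun x => f x - u x) := h2
      _ ≤ ENNReal.ofReal (L ^ p) * ENNReal.ofReal (ε / (L ^ p + 1)) :=
          mul_le_mul_right hud.le _
      _ = ENNReal.ofReal (L ^ p * (ε / (L ^ p + 1))) := (ENNReal.ofReal_mul hLp).symm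
      _ < ENNReal.ofReal ε := by
          rw [ENNReal.ofReal_lt_ofReal_iff hε]
          have h3 : L ^ p * (ε / (L ^ p + 1)) = (L ^ p) * ε / (L ^ p + 1) := by ring
          rw [h3, div_lt_iff₀ (by positivity)]
          nlinarith

lemma brclos_finsupp {p : ℝ} (hp : p ≠ 0) {f : V → ℝ} (hb : BddFun f)
    (hs : (Function.support f).Finite) : BRClos G p o f := by
  refine ⟨hb, fun ε hε => ⟨f, hs, ?_⟩⟩
  have h1 : (fun x => f x - f x) = fun _ => (0:ℝ) := by funext x; ring
  rw [h1]
  have h2 : DpDist G p o (fun _ => (0:ℝ)) = 0 := by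
    simp [DpDist, Ip_const G p hp, Real.zero_rpow hp]
  rw [h2]
  exact ENNReal.ofReal_pos.mpr hε

lemma brclos_max {p : ℝ} (hp : 0 < p) {f g : V → ℝ}
    (hf : BRClos G p o f) (hg : BRClos G p o g) :
    BRClos G p o (fun x => max (f x) (g x)) := by
  have hneg : BRClos G p o (fun x => (-1 : ℝ) * g x) := by
    refine brclos_comp G o hp (φ := fun t => (-1) * t) (L := 1) zero_le_one
      (fun a b => ?_) (by ring) hg
    rw [one_mul, show (-1:ℝ) * a - (-1) * b = -(a - b) by ring, abs_neg]
  have hsub : BRClos G p o (fun x => f x + (-1 : ℝ) * g x) := brclos_add G o hp hf hneg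
  have habs : BRClos G p o (fun x => |f x + (-1 : ℝ) * g x|) := by
    refine brclos_comp G o hp (φ := fun t => |t|) (L := 1) zero_le_one
      (fun a b => ?_) abs_zero hsub
    rw [one_mul]; exact abs_abs_sub_abs_le_abs_sub a b
  have hsum2 : BRClos G p o (fun x => (f x + g x) + |f x + (-1 : ℝ) * g x|) :=
    brclos_add G o hp (brclos_add G o hp hf hg) habs
  have hhalf : BRClos G p o
      (fun x => (1/2 : ℝ) * ((f x + g x) + |f x + (-1 : ℝ) * g x|)) := by
    refine brclos_comp G o hp (φ := fun t => (1/2 : ℝ) * t) (L := 1/2) (by norm_num)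
      (fun a b => ?_) (by ring) hsum2
    rw [show (1/2:ℝ) * a - (1/2) * b = (1/2) * (a - b) by ring, abs_mul]
    simp [abs_of_nonneg]
  have hfinal : (fun x => (1/2 : ℝ) * ((f x + g x) + |f x + (-1 : ℝ) * g x|))
      = fun x => max (f x) (g x) := by
    funext x
    rcases le_total (f x) (g x) with h | h
    · rw [max_eq_right h, show f x + (-1:ℝ) * g x = f x - g x by ring,
        abs_of_nonpos (by linarith)]
      ring
    · rw [max_eq_left h, show f x + (-1:ℝ) * g x = f x - g x by ring,
        abs_of_nonneg (by linarith)]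
      ring
  rw [← hfinal]
  exact hhalf

lemma abs_min_sub_min_le_abs (a b c : ℝ) : |min a c - min b c| ≤ |a - b| := by
  rcases le_total a c with h1 | h1 <;> rcases le_total b c with h2 | h2
  · rw [min_eq_left h1, min_eq_left h2]
  · rw [min_eq_left h1, min_eq_right h2, abs_of_nonpos (by linarith),
      abs_of_nonpos (by linarith)]
    linarith
  · rw [min_eq_right h1, min_eq_left h2, abs_of_nonneg (by linarith),
      abs_of_nonneg (by linarith)]
    linarith
  · rw [min_eq_right h1, min_eq_right h2]
    simp [abs_nonneg]

lemma brclos_invabs {p : ℝ} (hp : 0 < p) {f : V → ℝ} (hf : BRClos G p o f)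
    {ε : ℝ} (hε : 0 < ε) : BRClos G p o (fun x => ε⁻¹ * |f x|) := by
  have hεi : (0:ℝ) ≤ ε⁻¹ := inv_nonneg.mpr hε.le
  refine brclos_comp G o hp (φ := fun t => ε⁻¹ * |t|) (L := ε⁻¹) hεi
    (fun a b => ?_) (by simp) hf
  rw [← mul_sub, abs_mul, abs_of_nonneg hεi]
  exact mul_le_mul_of_nonneg_left (abs_abs_sub_abs_le_abs_sub a b) hεi

lemma sublevel_infinite {p : ℝ} (hp : 0 < p)
    (hne : ¬ BRClos G p o (fun _ => (1:ℝ))) {f : V → ℝ} (hf : BRClos G p o f)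
    {ε : ℝ} (hε : 0 < ε) : {x | |f x| < ε}.Infinite := by
  by_contra hfin
  rw [Set.not_infinite] at hfin
  have hεi : (0:ℝ) ≤ ε⁻¹ := inv_nonneg.mpr hε.le
  have hmul : BRClos G p o (fun x => ε⁻¹ * |f x|) := brclos_invabs G o hp hf hε
  have hh : BRClos G p o (fun x => min (ε⁻¹ * |f x|) 1) := by
    refine brclos_comp G o hp (φ := fun t => min t 1) (L := 1) zero_le_one
      (fun a b => ?_) (min_eq_left zero_le_one) hmul
    rw [one_mul]
    exact abs_min_sub_min_le_abs a b 1
  have hgsupp : Function.support (fun x => 1 - min (ε⁻¹ * |f x|) 1) ⊆ {x | |f x| < ε} := by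
    intro x hx
    by_contra hxn
    simp only [Set.mem_setOf_eq, not_lt] at hxn
    have h1 : (1:ℝ) ≤ ε⁻¹ * |f x| := by
      have := mul_le_mul_of_nonneg_left hxn hεi
      rwa [inv_mul_cancel₀ hε.ne'] at this
    have h2 : min (ε⁻¹ * |f x|) 1 = 1 := min_eq_right h1
    exact hx (by simp [h2])
  have hg : BRClos G p o (fun x => 1 - min (ε⁻¹ * |f x|) 1) := by
    refine brclos_finsupp G o hp.ne' ?_ (hfin.subset hgsupp)
    refine ⟨1, fun x => ?_⟩
    have hm0 : (0:ℝ) ≤ min (ε⁻¹ * |f x|) 1 := le_min (by positivity) zero_le_one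
    have hm1 : min (ε⁻¹ * |f x|) 1 ≤ 1 := min_le_right _ _
    rw [abs_of_nonneg (by linarith)]
    linarith
  apply hne
  have heq : (fun x => (min (ε⁻¹ * |f x|) 1) + (1 - min (ε⁻¹ * |f x|) 1)) = fun _ => (1:ℝ) := by
    funext x; ring
  rw [← heq]
  exact brclos_add G o hp hh hg

/-- The family of sublevel sets of functions in `B(\overline{ℝG})_{D_p}`. -/
def SFam (G : SimpleGraph V) (p : ℝ) (o : V) : Set (Set V) :=
  {S | ∃ f ε, BRClos G p o f ∧ 0 < ε ∧ S = {x | |f x| < ε}}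

lemma sfam_directed {p : ℝ} (hp : 0 < p) {S T : Set V}
    (hS : S ∈ SFam G p o) (hT : T ∈ SFam G p o) :
    ∃ W ∈ SFam G p o, W ⊆ S ∩ T := by
  obtain ⟨f, ε, hf, hε, rfl⟩ := hS
  obtain ⟨g, δ, hg, hδ, rfl⟩ := hT
  have hF : BRClos G p o (fun x => max (ε⁻¹ * |f x|) (δ⁻¹ * |g x|)) :=
    brclos_max G o hp (brclos_invabs G o hp hf hε) (brclos_invabs G o hp hg hδ)
  refine ⟨{x | |max (ε⁻¹ * |f x|) (δ⁻¹ * |g x|)| < 1}, ⟨_, 1, hF, one_pos, rfl⟩, ?_⟩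
  intro x hx
  have hx' : max (ε⁻¹ * |f x|) (δ⁻¹ * |g x|) < 1 := (le_abs_self _).trans_lt hx
  constructor
  · have h1 : ε⁻¹ * |f x| < 1 := (le_max_left _ _).trans_lt hx'
    have h2 := mul_lt_mul_of_pos_left h1 hε
    rwa [← mul_assoc, mul_inv_cancel₀ hε.ne', one_mul, mul_one] at h2
  · have h1 : δ⁻¹ * |g x| < 1 := (le_max_right _ _).trans_lt hx'
    have h2 := mul_lt_mul_of_pos_left h1 hδ
    rwa [← mul_assoc, mul_inv_cancel₀ hδ.ne', one_mul, mul_one] at h2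

lemma sfam_sInter {p : ℝ} (hp : 0 < p) (t : Set (Set V)) (htf : t.Finite)
    (hts : t ⊆ SFam G p o) : ∃ W ∈ SFam G p o, W ⊆ ⋂₀ t := by
  revert hts
  refine Set.Finite.induction_on _ htf ?_ ?_
  · intro _
    refine ⟨{x | |(0:ℝ)| < 1}, ⟨fun _ => (0:ℝ), 1, ?_, one_pos, rfl⟩, by simp⟩
    exact brclos_finsupp G o hp.ne' ⟨0, fun x => by simp⟩
      (Set.Finite.subset (Set.finite_empty) (fun x hx => absurd rfl hx))
  · intro a s _ _ ih hts
    obtain ⟨W, hWS, hW⟩ := ih (fun x hx => hts (Set.mem_insert_of_mem a hx))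
    have haS : a ∈ SFam G p o := hts (Set.mem_insert a s)
    obtain ⟨W', hW'S, hW'⟩ := sfam_directed G o hp haS hWS
    refine ⟨W', hW'S, ?_⟩
    rw [Set.sInter_insert]
    exact fun x hx => ⟨(hW' hx).1, hW ((hW' hx).2)⟩

lemma memBDp_single (k : ℕ) {p : ℝ} (hp : 1 < p) (hk : BoundedDegree G k) (x : V) :
    MemBDp G p (fun y => if y = x then (1:ℝ) else 0) := by
  set f : V → ℝ := fun y => if y = x then (1:ℝ) else 0 with hfdef
  have h01 : ∀ y, 0 ≤ f y ∧ f y ≤ 1 := fun y => by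
    simp only [hfdef]; split <;> norm_num
  have hbound1 : ∀ a b : V, ENNReal.ofReal (|f b - f a| ^ p) ≤ 1 := by
    intro a b
    have h1 : |f b - f a| ≤ 1 := by
      have := h01 a; have := h01 b
      rw [abs_le]; constructor <;> linarith [(h01 a).1, (h01 a).2, (h01 b).1, (h01 b).2]
    have h2 : |f b - f a| ^ p ≤ 1 := Real.rpow_le_one (abs_nonneg _) h1 (by linarith)
    exact ENNReal.ofReal_le_one.mpr h2
  constructor
  · exact ⟨1, fun y => by simp only [hfdef]; split <;> norm_num⟩
  · have hterm : ∀ a b : V, (if G.Adj a b then ENNReal.ofReal (|f b - f a| ^ p) else 0)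
        ≤ (if a = x then (if G.Adj x b then (1:ℝ≥0∞) else 0) else 0)
          + (if b = x then (if G.Adj a x then (1:ℝ≥0∞) else 0) else 0) := by
      intro a b
      by_cases hab : G.Adj a b
      · by_cases ha : a = x
        · subst ha
          rw [if_pos rfl, if_pos hab]
          exact le_add_of_le_of_nonneg (by simpa [hab] using hbound1 a b) zero_le
        · by_cases hb : b = x
          · subst hb
            rw [if_neg ha, if_pos rfl, if_pos hab, zero_add]
            simpa [hab] using hbound1 a b
          · have h0 : f b - f a = 0 := by simp [hfdef, ha, hb]
            simp [hab, h0, Real.zero_rpow (by linarith : p ≠ 0)]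
      · simp [hab]
    have hle : Ip G p f ≤
        (∑' a : V, ∑' b : V, (if a = x then (if G.Adj x b then (1:ℝ≥0∞) else 0) else 0))
          + ∑' a : V, ∑' b : V, (if b = x then (if G.Adj a x then (1:ℝ≥0∞) else 0) else 0) := by
      unfold Ip
      rw [← ENNReal.tsum_add]
      refine ENNReal.tsum_le_tsum fun a => ?_
      rw [← ENNReal.tsum_add]
      exact ENNReal.tsum_le_tsum fun b => hterm a b
    have hfin := (hk x).1
    have hnb1 : (∑' b : V, if G.Adj x b then (1:ℝ≥0∞) else 0) ≠ ⊤ := by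
      have heq : (∑' b : V, if G.Adj x b then (1:ℝ≥0∞) else 0)
          = ∑ b ∈ hfin.toFinset, if G.Adj x b then (1:ℝ≥0∞) else 0 := by
        refine tsum_eq_sum fun b hb => ?_
        rw [Set.Finite.mem_toFinset] at hb
        exact if_neg fun hadj => hb hadj
      rw [heq]
      exact (ENNReal.sum_lt_top.mpr fun b _ => by split <;> simp).ne
    have hnb2 : (∑' a : V, if G.Adj a x then (1:ℝ≥0∞) else 0) ≠ ⊤ := by
      have heq : (∑' a : V, if G.Adj a x then (1:ℝ≥0∞) else 0)
          = ∑ a ∈ hfin.toFinset, if G.Adj a x then (1:ℝ≥0∞) else 0 := by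
        refine tsum_eq_sum fun a ha => ?_
        rw [Set.Finite.mem_toFinset] at ha
        exact if_neg fun hadj => ha hadj.symm
      rw [heq]
      exact (ENNReal.sum_lt_top.mpr fun a _ => by split <;> simp).ne
    have h1 : (∑' a : V, ∑' b : V, (if a = x then (if G.Adj x b then (1:ℝ≥0∞) else 0) else 0))
        = ∑' b : V, (if G.Adj x b then (1:ℝ≥0∞) else 0) := by
      have hc : ∀ a : V, (∑' b : V, (if a = x then (if G.Adj x b then (1:ℝ≥0∞) else 0) else 0))
          = if a = x then (∑' b : V, if G.Adj x b then (1:ℝ≥0∞) else 0) else 0 := by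
        intro a; split <;> simp
      rw [tsum_congr hc, tsum_ite_eq]
    have h2 : (∑' a : V, ∑' b : V, (if b = x then (if G.Adj a x then (1:ℝ≥0∞) else 0) else 0))
        = ∑' a : V, (if G.Adj a x then (1:ℝ≥0∞) else 0) := by
      refine tsum_congr fun a => ?_
      exact tsum_ite_eq x (fun _ => if G.Adj a x then (1:ℝ≥0∞) else 0)
    refine ne_top_of_le_ne_top ?_ hle
    rw [h1, h2]
    exact ENNReal.add_ne_top.mpr ⟨hnb1, hnb2⟩

lemma exists_tendsto_of_bdd (U : Ultrafilter V) {f : V → ℝ} (hb : BddFun f) :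
    ∃ a : ℝ, Filter.Tendsto f ↑U (nhds a) := by
  obtain ⟨M, hM⟩ := hb
  have hmem : Set.Icc (-M) M ∈ Ultrafilter.map f U := by
    rw [Ultrafilter.mem_map]
    refine Filter.univ_mem' fun x => ?_
    have h1 := hM x
    have h2 := le_abs_self (f x)
    have h3 := neg_abs_le (f x)
    exact ⟨by linarith, by linarith⟩
  obtain ⟨a, -, ha⟩ := (isCompact_Icc (a := -M) (b := M)).ultrafilter_le_nhds
    (Ultrafilter.map f U) (by rwa [Filter.le_principal_iff])
  exact ⟨a, ha⟩

end AuxLemmas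

theorem stmt10 [Countable V] [Infinite V] (G : SimpleGraph V) (k : ℕ)
    (hG : G.Connected) (hk : BoundedDegree G k) (p : ℝ) (hp : 1 < p) (o : V) :
    (¬ ∃ τ : BDpChar G p, InPBoundary G p o τ) ↔
      BRClos G p o (fun _ => (1 : ℝ)) := by
  have hp0 : (0:ℝ) < p := by linarith
  have hpne : p ≠ 0 := hp0.ne'
  constructor
  · -- no boundary point → parabolic
    intro hno
    by_contra hne
    apply hno
    -- Build the filter from sublevel sets and the cofinite filter.
    have hSinf : ∀ S ∈ SFam G p o, S.Infinite := by
      rintro S ⟨f, ε, hf, hε, rfl⟩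
      exact sublevel_infinite G o hp0 hne hf hε
    have hne_bot : Filter.NeBot (Filter.cofinite ⊓ Filter.generate (SFam G p o)) := by
      rw [Filter.inf_neBot_iff]
      intro s hs t ht
      rw [Filter.mem_generate_iff] at ht
      obtain ⟨tt, htt, httfin, hsub⟩ := ht
      obtain ⟨W, hWS, hW⟩ := sfam_sInter G o hp0 tt httfin htt
      have hWinf := hSinf W hWS
      obtain ⟨x, hxW, hxs⟩ := (hWinf.diff hs).nonempty
      exact ⟨x, not_not.mp hxs, hsub (hW hxW)⟩
    set U : Ultrafilter V :=
      @Ultrafilter.of V (Filter.cofinite ⊓ Filter.generate (SFam G p o)) hne_bot with hUdef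
    have hUle : (↑U : Filter V) ≤ Filter.cofinite ⊓ Filter.generate (SFam G p o) :=
      @Ultrafilter.of_le V _ hne_bot
    have hUgen : (↑U : Filter V) ≤ Filter.generate (SFam G p o) := hUle.trans inf_le_right
    have htend0 : ∀ f : V → ℝ, BRClos G p o f → Filter.Tendsto f ↑U (nhds 0) := by
      intro f hf
      rw [Metric.tendsto_nhds]
      intro ε hε
      have hmem : {x | |f x| < ε} ∈ Filter.generate (SFam G p o) :=
        Filter.GenerateSets.basic ⟨f, ε, hf, hε, rfl⟩
      filter_upwards [hUgen hmem] with x hx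
      simpa [Real.dist_eq] using hx
    refine ⟨⟨fun f => Filter.limUnder ↑U f, ?_, ?_, ?_, ?_, ?_⟩, ?_, ?_⟩
    · -- map_add
      intro f g hf hg
      obtain ⟨a, ha⟩ := exists_tendsto_of_bdd U hf.1
      obtain ⟨b, hb⟩ := exists_tendsto_of_bdd U hg.1
      beta_reduce
      rw [ha.limUnder_eq, hb.limUnder_eq, (ha.add hb).limUnder_eq]
    · -- map_mul
      intro f g hf hg
      obtain ⟨a, ha⟩ := exists_tendsto_of_bdd U hf.1
      obtain ⟨b, hb⟩ := exists_tendsto_of_bdd U hg.1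
      beta_reduce
      rw [ha.limUnder_eq, hb.limUnder_eq, (ha.mul hb).limUnder_eq]
    · -- map_smul
      intro c f hf
      obtain ⟨a, ha⟩ := exists_tendsto_of_bdd U hf.1
      beta_reduce
      rw [ha.limUnder_eq, (ha.const_mul c).limUnder_eq]
    · -- bound
      intro f hf
      obtain ⟨a, ha⟩ := exists_tendsto_of_bdd U hf.1
      beta_reduce
      rw [ha.limUnder_eq]
      obtain ⟨M, hM⟩ := hf.1
      have hbdd : BddAbove (Set.range fun x => |f x|) := ⟨M, by rintro y ⟨x, rfl⟩; exact hM x⟩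
      have hsup : ∀ x, |f x| ≤ ⨆ x, |f x| := fun x => le_ciSup hbdd x
      have h1 : a ≤ ⨆ x, |f x| :=
        le_of_tendsto ha (Filter.Eventually.of_forall fun x => (le_abs_self _).trans (hsup x))
      have h2 : -(⨆ x, |f x|) ≤ a := by
        refine ge_of_tendsto ha (Filter.Eventually.of_forall fun x => ?_)
        have h3 := hsup x
        have h4 := neg_abs_le (f x)
        linarith
      have h5 : |a| ≤ ⨆ x, |f x| := abs_le.mpr ⟨h2, h1⟩
      unfold BDpNorm
      have h6 : 0 ≤ (Ip G p f).toReal ^ (1/p) := Real.rpow_nonneg ENNReal.toReal_nonneg _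
      linarith
    · -- nonzero
      refine ⟨fun _ => (1:ℝ), memBDp_const G p hpne 1, ?_⟩
      beta_reduce
      rw [Filter.Tendsto.limUnder_eq
        (tendsto_const_nhds : Filter.Tendsto (fun _ : V => (1:ℝ)) (↑U) (nhds 1))]
      exact one_ne_zero
    · -- not an evaluation
      intro x
      refine ⟨fun y => if y = x then (1:ℝ) else 0, memBDp_single G k hp hk x, ?_⟩
      have hcl : BRClos G p o (fun y => if y = x then (1:ℝ) else 0) := by
        refine brclos_finsupp G o hpne ⟨1, fun y => by dsimp only; split <;> norm_num⟩ ?_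
        refine (Set.finite_singleton x).subset fun y hy => ?_
        by_contra hyx
        rw [Set.mem_singleton_iff] at hyx
        exact hy (if_neg hyx)
      dsimp only
      rw [(htend0 _ hcl).limUnder_eq]
      simp
    · -- annihilates the closure
      intro f hf
      dsimp only
      exact (htend0 f hf).limUnder_eq
  · -- parabolic → no boundary point
    rintro h1 ⟨τ, hτ1, hτ2⟩
    have hone : τ.toFun (fun _ => 1) = 0 := hτ2 _ h1
    obtain ⟨f, hf, hfne⟩ := τ.nonzero
    have hm := τ.map_mul f (fun _ => 1) hf (memBDp_const G p hpne 1)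
    rw [hone, mul_zero] at hm
    have heq : (fun x => f x * (1:ℝ)) = f := by funext x; rw [mul_one]
    rw [heq] at hm
    exact hfne hm
end

section
/- Let G and H be connected graphs of bounded degree with graph metrics, let p > 1, and let φ : V_G → V_H be a rough isometry. Then the pullback φ*: f ↦ f∘φ maps D_p(H) into D_p(G); more precisely there is a constant C (depending only on p and the rough isometry constants) such that I_p(f∘φ, V_G) ≤ C · I_p(f, V_H) for all f : V_H → ℝ. -/
open scoped ENNReal Classical

variable {V : Type*}

lemma my_exists_penult (G : SimpleGraph V) (hc : G.Connected) (x0 x : V) (R : ℕ)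
    (h : G.dist x0 x ≤ R + 1) : ∃ z, G.dist x0 z ≤ R ∧ (x = z ∨ G.Adj z x) := by
  by_cases h0 : G.dist x0 x ≤ R
  · exact ⟨x, h0, Or.inl rfl⟩
  · have hne : G.dist x x0 ≠ 0 := by rw [SimpleGraph.dist_comm]; omega
    obtain ⟨q, hq⟩ := hc.exists_walk_length_eq_dist x x0
    cases q with
    | nil => exact absurd (by simp) hne
    | @cons _ z' _ hadj q' =>
      refine ⟨z', ?_, Or.inr hadj.symm⟩
      have h1 : G.dist z' x0 ≤ q'.length := SimpleGraph.dist_le q'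
      have h2 : G.dist x0 z' = G.dist z' x0 := SimpleGraph.dist_comm ..
      have h3 : G.dist x0 x = G.dist x x0 := SimpleGraph.dist_comm ..
      simp [SimpleGraph.Walk.length_cons] at hq
      omega

lemma my_ball_bound (G : SimpleGraph V) (k : ℕ) (hk : BoundedDegree G k) (hc : G.Connected)
    (x0 : V) : ∀ R : ℕ, ∃ s : Finset V, (∀ x, G.dist x0 x ≤ R → x ∈ s) ∧ s.card ≤ (k+1)^(R+1) := by
  classical
  intro R; induction R with
  | zero =>
    refine ⟨{x0}, fun x hx => ?_, by simp⟩
    have : x0 = x := (hc.dist_eq_zero_iff).mp (Nat.le_zero.mp hx)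
    simp [this]
  | succ R ih =>
    obtain ⟨s, hs, hcard⟩ := ih
    refine ⟨s.biUnion (fun z => insert z (hk z).1.toFinset), ?_, ?_⟩
    · intro x hx
      obtain ⟨z, hz, hcase⟩ := my_exists_penult G hc x0 x R hx
      refine Finset.mem_biUnion.mpr ⟨z, hs z hz, ?_⟩
      rcases hcase with rfl | hadj
      · exact Finset.mem_insert_self _ _
      · exact Finset.mem_insert_of_mem ((hk z).1.mem_toFinset.mpr hadj)
    · calc (s.biUnion (fun z => insert z (hk z).1.toFinset)).card
          ≤ ∑ z ∈ s, (insert z (hk z).1.toFinset).card := Finset.card_biUnion_le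
        _ ≤ ∑ _z ∈ s, (k+1) := by
            refine Finset.sum_le_sum fun z _ => ?_
            refine (Finset.card_insert_le _ _).trans ?_
            have : (hk z).1.toFinset.card ≤ k := by
              rw [← Set.ncard_eq_toFinset_card _ (hk z).1]; exact (hk z).2
            omega
        _ = s.card * (k+1) := by simp [Finset.sum_const, mul_comm]
        _ ≤ (k+1)^(R+1) * (k+1) := Nat.mul_le_mul_right _ hcard
        _ = (k+1)^(R+1+1) := by ring

lemma my_dist_getVert (G : SimpleGraph V) (hc : G.Connected) {s t : V} (q : G.Walk s t) :
    ∀ i : ℕ, G.dist s (q.getVert i) ≤ i := by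
  intro i; induction i with
  | zero => simp [SimpleGraph.Walk.getVert_zero]
  | succ i ih =>
    by_cases hi : i < q.length
    · have hadj := q.adj_getVert_succ hi
      have h1 : G.dist (q.getVert i) (q.getVert (i+1)) ≤ 1 := by
        simpa using SimpleGraph.dist_le (SimpleGraph.Walk.cons hadj SimpleGraph.Walk.nil)
      calc G.dist s (q.getVert (i+1))
          ≤ G.dist s (q.getVert i) + G.dist (q.getVert i) (q.getVert (i+1)) := hc.dist_triangle
        _ ≤ i + 1 := add_le_add ih h1
    · have heq : q.getVert (i+1) = q.getVert i := by
        rw [q.getVert_of_length_le (Nat.le_of_not_lt hi),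
          q.getVert_of_length_le ((Nat.le_of_not_lt hi).trans (Nat.le_succ i))]
      rw [heq]; exact ih.trans (Nat.le_succ i)

lemma my_holder {p : ℝ} (hp : 1 < p) (n : ℕ) (d : ℕ → ℝ) :
    |∑ i ∈ Finset.range n, d i| ^ p ≤ (n:ℝ)^(p-1) * ∑ i ∈ Finset.range n, |d i| ^ p := by
  rcases Nat.eq_zero_or_pos n with h | h
  · subst h; simp [Real.zero_rpow (by positivity : p ≠ 0)]
  · have hn : (0:ℝ) < n := by exact_mod_cast h
    have hA : (0:ℝ) ≤ ∑ i ∈ Finset.range n, |d i| := Finset.sum_nonneg fun i _ => abs_nonneg _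
    have key := Real.rpow_arith_mean_le_arith_mean_rpow (Finset.range n) (fun _ => 1/(n:ℝ))
      (fun i => |d i|) (fun i _ => by positivity)
      (by simp [Finset.sum_const]; field_simp) (fun i _ => abs_nonneg _) hp.le
    simp only [← Finset.mul_sum] at key
    rw [Real.mul_rpow (by positivity) hA] at key
    have h1 : |∑ i ∈ Finset.range n, d i| ^ p ≤ (∑ i ∈ Finset.range n, |d i|) ^ p :=
      Real.rpow_le_rpow (abs_nonneg _) (Finset.abs_sum_le_sum_abs _ _) (by linarith)
    have hnp : (0:ℝ) < (n:ℝ) ^ p := Real.rpow_pos_of_pos hn p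
    have h2 : ((1:ℝ)/n) ^ p = ((n:ℝ)^p)⁻¹ := by
      rw [one_div, Real.inv_rpow hn.le]
    rw [h2] at key
    have h3 : (∑ i ∈ Finset.range n, |d i|) ^ p
        ≤ (n:ℝ)^p * ((1/(n:ℝ)) * ∑ i ∈ Finset.range n, |d i| ^ p) := by
      have := mul_le_mul_of_nonneg_left key hnp.le
      calc (∑ i ∈ Finset.range n, |d i|) ^ p
          = (n:ℝ)^p * (((n:ℝ)^p)⁻¹ * (∑ i ∈ Finset.range n, |d i|) ^ p) := by
            field_simp
        _ ≤ (n:ℝ)^p * ((1/(n:ℝ)) * ∑ i ∈ Finset.range n, |d i| ^ p) := this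
    have h4 : (n:ℝ)^p * ((1/(n:ℝ)) * ∑ i ∈ Finset.range n, |d i| ^ p)
        = (n:ℝ)^(p-1) * ∑ i ∈ Finset.range n, |d i| ^ p := by
      rw [Real.rpow_sub hn, Real.rpow_one]; field_simp
    linarith

lemma my_tsum_comp_le {α β : Type*} (π : α → β) (g : β → ℝ≥0∞) (M : ℕ)
    (hfib : ∀ w, g w ≠ 0 → {t : α | π t = w}.Finite ∧ {t : α | π t = w}.ncard ≤ M) :
    ∑' t : α, g (π t) ≤ (M : ℝ≥0∞) * ∑' w : β, g w := by
  classical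
  rw [← Equiv.tsum_eq (Equiv.sigmaFiberEquiv π) (fun t => g (π t))]
  have hcongr : ∀ q : Σ w, {t // π t = w}, g (π ((Equiv.sigmaFiberEquiv π) q)) = g q.1 := by
    rintro ⟨w, t, ht⟩; simp [ht]
  rw [tsum_congr hcongr, ENNReal.tsum_sigma', ← ENNReal.tsum_mul_left]
  refine ENNReal.tsum_le_tsum fun w => ?_
  by_cases hg : g w = 0
  · simp [hg]
  · obtain ⟨hfin, hcard⟩ := hfib w hg
    haveI : Fintype {t // π t = w} := hfin.fintype
    have hval : ∀ b : {t // π t = w}, g (⟨w, b⟩ : Σ w, {t // π t = w}).fst = g w := fun _ => rfl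
    rw [tsum_fintype, Finset.sum_congr rfl (fun b _ => hval b), Finset.sum_const,
      Finset.card_univ, nsmul_eq_mul]
    have hc2 : Fintype.card {t // π t = w} ≤ M := by
      rw [← Nat.card_eq_fintype_card]
      show Nat.card ↥{t | π t = w} ≤ M
      rw [Nat.card_coe_set_eq]; exact hcard
    exact mul_le_mul_left (by exact_mod_cast hc2) _

theorem stmt17 {W : Type*} [Countable V] [Infinite V] [Countable W] [Infinite W]
    (G : SimpleGraph V) (H : SimpleGraph W) (kG kH : ℕ)
    (hGc : G.Connected) (hHc : H.Connected)
    (hkG : BoundedDegree G kG) (hkH : BoundedDegree H kH)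
    (p : ℝ) (hp : 1 < p) (φ : V → W)
    (a b c : ℝ) (ha : 1 ≤ a) (hb : 0 ≤ b) (hc : 0 < c)
    (hlow : ∀ x y : V, (1/a) * (G.dist x y : ℝ) - b ≤ (H.dist (φ x) (φ y) : ℝ))
    (hup : ∀ x y : V, (H.dist (φ x) (φ y) : ℝ) ≤ a * (G.dist x y : ℝ) + b)
    (hdense : ∀ w : W, ∃ x : V, (H.dist (φ x) w : ℝ) < c) :
    ∃ C : ℝ≥0∞, C ≠ ⊤ ∧ ∀ f : W → ℝ,
      Ip G p (fun x => f (φ x)) ≤ C * Ip H p f := by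
  classical
  set L : ℕ := ⌈a + b⌉₊ with hLdef
  have hLreal : a + b ≤ (L:ℝ) := Nat.le_ceil _
  have ha0 : (0:ℝ) < a := lt_of_lt_of_le one_pos ha
  choose wk hwk using fun u v => hHc.exists_walk_length_eq_dist u v
  set π : V × V × ℕ → W × W := fun t =>
    ((wk (φ t.1) (φ t.2.1)).getVert t.2.2, (wk (φ t.1) (φ t.2.1)).getVert (t.2.2+1)) with hπdef
  set S : Set (V × V × ℕ) := {t | G.Adj t.1 t.2.1 ∧ t.2.2 < L} with hSdef
  set R : ℕ := ⌈a * (2*(L:ℝ) + b)⌉₊ with hRdef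
  set M : ℕ := (kG+1)^(R+1) * ((kG+1)^(R+2) * L) with hMdef
  have hlen : ∀ x y : V, G.Adj x y → H.dist (φ x) (φ y) ≤ L := by
    intro x y hxy
    have hd1 : G.dist x y ≤ 1 := by
      simpa using SimpleGraph.dist_le (SimpleGraph.Walk.cons hxy SimpleGraph.Walk.nil)
    have hreal : (H.dist (φ x) (φ y) : ℝ) ≤ (L:ℝ) := by
      have h2 := hup x y
      have h3 : (G.dist x y : ℝ) ≤ 1 := by exact_mod_cast hd1
      have h4 : (0:ℝ) ≤ (G.dist x y : ℝ) := Nat.cast_nonneg _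
      nlinarith
    exact_mod_cast hreal
  have hkey : ∀ (x y : V) (i : ℕ) (u : W), i < L →
      (wk (φ x) (φ y)).getVert i = u → H.dist (φ x) u ≤ L := by
    intro x y i u hiL hgv
    have hgd := my_dist_getVert H hHc (wk (φ x) (φ y)) i
    rw [hgv] at hgd
    omega
  have hfiber : ∀ w : W × W, H.Adj w.1 w.2 →
      {t : ↥S | π t.1 = w}.Finite ∧ {t : ↥S | π t.1 = w}.ncard ≤ M := by
    intro w hw
    rcases Set.eq_empty_or_nonempty {t : ↥S | π t.1 = w} with he | ⟨t0, ht0⟩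
    · rw [he]; exact ⟨Set.finite_empty, by simp⟩
    set x0 : V := t0.1.1 with hx0def
    have ht0mem : t0.1 ∈ S := t0.2
    have ht0' : π t0.1 = w := ht0
    have hx0 : H.dist (φ x0) w.1 ≤ L := by
      refine hkey x0 t0.1.2.1 t0.1.2.2 w.1 ht0mem.2 ?_
      have := congrArg Prod.fst ht0'
      rw [hπdef] at this
      exact this
    obtain ⟨s1, hs1, hs1c⟩ := my_ball_bound G kG hkG hGc x0 R
    obtain ⟨s2, hs2, hs2c⟩ := my_ball_bound G kG hkG hGc x0 (R+1)
    have hin : ∀ t : ↥S, π t.1 = w → t.1 ∈ (s1 ×ˢ s2 ×ˢ Finset.range L) := by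
      rintro ⟨⟨x, y, i⟩, hmem⟩ ht
      have hadj : G.Adj x y := hmem.1
      have hiL : i < L := hmem.2
      have hxw : H.dist (φ x) w.1 ≤ L := by
        refine hkey x y i w.1 hiL ?_
        have := congrArg Prod.fst ht
        rw [hπdef] at this
        exact this
      have htri : H.dist (φ x0) (φ x) ≤ 2*L := by
        calc H.dist (φ x0) (φ x) ≤ H.dist (φ x0) w.1 + H.dist w.1 (φ x) := hHc.dist_triangle
          _ ≤ L + L := add_le_add hx0 (by rw [SimpleGraph.dist_comm]; exact hxw)
          _ = 2*L := by omega
      have hGx : G.dist x0 x ≤ R := by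
        have h5 := hlow x0 x
        have h6 : (H.dist (φ x0) (φ x) : ℝ) ≤ 2*(L:ℝ) := by exact_mod_cast htri
        have h8 : (1/a) * (G.dist x0 x : ℝ) ≤ 2*(L:ℝ) + b := by linarith
        have h9 := mul_le_mul_of_nonneg_left h8 ha0.le
        have h7 : (G.dist x0 x : ℝ) ≤ a * (2*(L:ℝ) + b) := by
          calc (G.dist x0 x : ℝ) = a * ((1/a) * (G.dist x0 x : ℝ)) := by field_simp
            _ ≤ a * (2*(L:ℝ)+b) := h9
        have h10 : (G.dist x0 x : ℝ) ≤ (R:ℝ) := h7.trans (Nat.le_ceil _)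
        exact_mod_cast h10
      have hGy : G.dist x0 y ≤ R+1 := by
        have hd1 : G.dist x y ≤ 1 := by
          simpa using SimpleGraph.dist_le (SimpleGraph.Walk.cons hadj SimpleGraph.Walk.nil)
        calc G.dist x0 y ≤ G.dist x0 x + G.dist x y := hGc.dist_triangle
          _ ≤ R + 1 := add_le_add hGx hd1
      simp only [Finset.mem_product, Finset.mem_range]
      exact ⟨hs1 x hGx, hs2 y hGy, hiL⟩
    have himg : Subtype.val '' {t : ↥S | π t.1 = w} ⊆ ↑(s1 ×ˢ s2 ×ˢ Finset.range L) := by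
      rintro _ ⟨t, ht, rfl⟩; exact hin t ht
    have hfin : {t : ↥S | π t.1 = w}.Finite := by
      have h11 : (Subtype.val '' {t : ↥S | π t.1 = w}).Finite :=
        ((s1 ×ˢ s2 ×ˢ Finset.range L).finite_toSet).subset himg
      exact Set.Finite.of_finite_image h11 Subtype.val_injective.injOn
    refine ⟨hfin, ?_⟩
    have hc1 : {t : ↥S | π t.1 = w}.ncard = (Subtype.val '' {t : ↥S | π t.1 = w}).ncard :=
      (Set.ncard_image_of_injective _ Subtype.val_injective).symm
    rw [hc1]
    calc (Subtype.val '' {t : ↥S | π t.1 = w}).ncard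
        ≤ ((s1 ×ˢ s2 ×ˢ Finset.range L : Finset (V × V × ℕ)) : Set (V × V × ℕ)).ncard :=
          Set.ncard_le_ncard himg (Finset.finite_toSet _)
      _ = (s1 ×ˢ s2 ×ˢ Finset.range L).card := Set.ncard_coe_finset _
      _ = s1.card * (s2.card * L) := by simp [Finset.card_product]
      _ ≤ M := by
          rw [hMdef]
          exact Nat.mul_le_mul hs1c (Nat.mul_le_mul hs2c le_rfl)
  refine ⟨ENNReal.ofReal ((L:ℝ)^(p-1)) * M,
    ENNReal.mul_ne_top ENNReal.ofReal_ne_top (ENNReal.natCast_ne_top M), ?_⟩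
  intro f
  set g : W × W → ℝ≥0∞ :=
    fun w => if H.Adj w.1 w.2 then ENNReal.ofReal (|f w.2 - f w.1| ^ p) else 0 with hgdef
  have stepA : ∀ x y : V,
      (if G.Adj x y then ENNReal.ofReal (|f (φ y) - f (φ x)| ^ p) else 0)
      ≤ ENNReal.ofReal ((L:ℝ)^(p-1)) *
        (if G.Adj x y then ∑ i ∈ Finset.range L, g (π (x,y,i)) else 0) := by
    intro x y
    by_cases hadj : G.Adj x y
    · simp only [if_pos hadj]
      have hnL : (wk (φ x) (φ y)).length ≤ L := by rw [hwk]; exact hlen x y hadj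
      set q : H.Walk (φ x) (φ y) := wk (φ x) (φ y) with hq
      set d : ℕ → ℝ := fun i => f (q.getVert (i+1)) - f (q.getVert i) with hd
      have htel : f (φ y) - f (φ x) = ∑ i ∈ Finset.range q.length, d i := by
        rw [hd, Finset.sum_range_sub (fun i => f (q.getVert i)), q.getVert_length, q.getVert_zero]
      have hreal : |f (φ y) - f (φ x)| ^ p
          ≤ (L:ℝ)^(p-1) * ∑ i ∈ Finset.range q.length, |d i| ^ p := by
        rw [htel]
        refine (my_holder hp q.length d).trans ?_
        refine mul_le_mul_of_nonneg_right ?_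
          (Finset.sum_nonneg fun i _ => Real.rpow_nonneg (abs_nonneg _) _)
        exact Real.rpow_le_rpow (Nat.cast_nonneg _) (by exact_mod_cast hnL) (by linarith)
      have hofreal : ENNReal.ofReal (|f (φ y) - f (φ x)| ^ p)
          ≤ ENNReal.ofReal ((L:ℝ)^(p-1)) *
            ∑ i ∈ Finset.range q.length, ENNReal.ofReal (|d i| ^ p) := by
        refine (ENNReal.ofReal_le_ofReal hreal).trans ?_
        rw [ENNReal.ofReal_mul (by positivity),
          ENNReal.ofReal_sum_of_nonneg (fun i _ => by positivity)]
      refine hofreal.trans (mul_le_mul_right ?_ _)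
      calc ∑ i ∈ Finset.range q.length, ENNReal.ofReal (|d i| ^ p)
          = ∑ i ∈ Finset.range q.length, g (π (x,y,i)) := by
            refine Finset.sum_congr rfl fun i hi => ?_
            have hiadj : H.Adj (q.getVert i) (q.getVert (i+1)) :=
              q.adj_getVert_succ (Finset.mem_range.mp hi)
            rw [hπdef, hgdef, hd]
            simp [← hq, hiadj]
        _ ≤ ∑ i ∈ Finset.range L, g (π (x,y,i)) :=
            Finset.sum_le_sum_of_subset (Finset.range_subset_range.mpr hnL)
    · simp [hadj]
  have hinner : ∀ x, ∑' q : V × ℕ, S.indicator (g ∘ π) (x, q)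
      = ∑' y, (if G.Adj x y then ∑ i ∈ Finset.range L, g (π (x,y,i)) else 0) := by
    intro x
    rw [ENNReal.tsum_prod']
    refine tsum_congr fun y => ?_
    by_cases hadj : G.Adj x y
    · rw [if_pos hadj]
      rw [tsum_eq_sum (s := Finset.range L)
        (f := fun i => S.indicator (g ∘ π) (x, y, i)) ?_]
      · refine Finset.sum_congr rfl fun i hi => ?_
        have hmem : (x, y, i) ∈ S := ⟨hadj, Finset.mem_range.mp hi⟩
        simp [Set.indicator_of_mem hmem]
      · intro i hi
        have hmem : (x, y, i) ∉ S := fun hm => hi (Finset.mem_range.mpr hm.2)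
        simp [Set.indicator_of_notMem hmem]
    · rw [if_neg hadj]
      have hz : ∀ i : ℕ, S.indicator (g ∘ π) (x, y, i) = 0 := by
        intro i
        exact Set.indicator_of_notMem (fun hm => hadj hm.1) _
      simp [hz]
  have hB : Ip G p (fun x => f (φ x)) ≤ ENNReal.ofReal ((L:ℝ)^(p-1)) *
      ∑' t : V × V × ℕ, S.indicator (g ∘ π) t := by
    rw [Ip]
    calc ∑' x, ∑' y, (if G.Adj x y then ENNReal.ofReal (|f (φ y) - f (φ x)| ^ p) else 0)
        ≤ ∑' x, ∑' y, ENNReal.ofReal ((L:ℝ)^(p-1)) *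
            (if G.Adj x y then ∑ i ∈ Finset.range L, g (π (x,y,i)) else 0) :=
          ENNReal.tsum_le_tsum fun x => ENNReal.tsum_le_tsum fun y => stepA x y
      _ = ENNReal.ofReal ((L:ℝ)^(p-1)) *
            ∑' x, ∑' y, (if G.Adj x y then ∑ i ∈ Finset.range L, g (π (x,y,i)) else 0) := by
          simp only [ENNReal.tsum_mul_left]
      _ = ENNReal.ofReal ((L:ℝ)^(p-1)) * ∑' t : V × V × ℕ, S.indicator (g ∘ π) t := by
          congr 1
          rw [ENNReal.tsum_prod']
          exact (tsum_congr hinner).symm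
  have hsub : ∑' t : V × V × ℕ, S.indicator (g ∘ π) t = ∑' t : ↥S, g (π t.1) :=
    (tsum_subtype S (g ∘ π)).symm
  have hcount : ∑' t : ↥S, g (π t.1) ≤ (M : ℝ≥0∞) * ∑' w : W × W, g w := by
    refine my_tsum_comp_le (fun t : ↥S => π t.1) g M (fun w hgw => ?_)
    have hwadj : H.Adj w.1 w.2 := by
      by_contra hcon
      exact hgw (by rw [hgdef]; simp [hcon])
    exact hfiber w hwadj
  have hIpH : ∑' w : W × W, g w = Ip H p f := by
    rw [Ip, ENNReal.tsum_prod' (f := g)]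
  calc Ip G p (fun x => f (φ x))
      ≤ ENNReal.ofReal ((L:ℝ)^(p-1)) * ∑' t : V × V × ℕ, S.indicator (g ∘ π) t := hB
    _ = ENNReal.ofReal ((L:ℝ)^(p-1)) * ∑' t : ↥S, g (π t.1) := by rw [hsub]
    _ ≤ ENNReal.ofReal ((L:ℝ)^(p-1)) * ((M : ℝ≥0∞) * ∑' w : W × W, g w) :=
        mul_le_mul_right hcount _
    _ = ENNReal.ofReal ((L:ℝ)^(p-1)) * (M : ℝ≥0∞) * Ip H p f := by
        rw [hIpH, mul_assoc]
end

section
/- Let G be a connected graph of bounded degree, p > 1, φ : V_G → V_H a rough isometry with rough inverse ψ : V_H → V_G satisfying d_G(ψ(φ(x)), x) ≤ a(c+b) for all x. Then for every f ∈ D_p(G), |f(ψ(φ(x))) − f(x)| → 0 as d_G(o, x) → ∞. -/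
open scoped ENNReal Classical

variable {V : Type*}

private lemma walk_telescope {G : SimpleGraph V} (f : V → ℝ) (δ : ℝ) (_hδ : 0 ≤ δ) :
    ∀ {u v : V} (w : G.Walk u v),
      (∀ a b : V, G.Adj a b → a ∈ w.support → |f b - f a| ≤ δ) →
      |f v - f u| ≤ w.length * δ := by
  intro u v w
  induction w with
  | nil => intro _; simp
  | cons h w ih =>
    intro hstep
    rename_i u' u'' v'
    have h1 : |f u'' - f u'| ≤ δ :=
      hstep _ _ h (by simp [SimpleGraph.Walk.support_cons])
    have h2 : |f v' - f u''| ≤ w.length * δ := by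
      refine ih ?_
      intro a b hab ha
      exact hstep a b hab (by simp [SimpleGraph.Walk.support_cons, ha])
    calc |f v' - f u'| ≤ |f v' - f u''| + |f u'' - f u'| := abs_sub_le _ _ _
      _ ≤ w.length * δ + δ := add_le_add h2 h1
      _ = (w.length + 1) * δ := by ring
      _ = ((SimpleGraph.Walk.cons h w).length : ℝ) * δ := by
          simp [SimpleGraph.Walk.length_cons]

theorem stmt18 {W : Type*} [Countable V] [Infinite V] [Countable W] [Infinite W]
    (G : SimpleGraph V) (H : SimpleGraph W) (kG kH : ℕ)
    (hGc : G.Connected) (hHc : H.Connected)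
    (hkG : BoundedDegree G kG) (hkH : BoundedDegree H kH)
    (p : ℝ) (hp : 1 < p) (φ : V → W) (ψ : W → V)
    (a b c : ℝ) (ha : 1 ≤ a) (hb : 0 ≤ b) (hc : 0 < c)
    (hlow : ∀ x y : V, (1/a) * (G.dist x y : ℝ) - b ≤ (H.dist (φ x) (φ y) : ℝ))
    (hup : ∀ x y : V, (H.dist (φ x) (φ y) : ℝ) ≤ a * (G.dist x y : ℝ) + b)
    (hdense : ∀ w : W, ∃ x : V, (H.dist (φ x) w : ℝ) < c)
    (hinv : ∀ x : V, (G.dist (ψ (φ x)) x : ℝ) ≤ a * (c + b))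
    (o : V) (f : V → ℝ) (hf : Ip G p f ≠ ⊤) :
    ∀ ε : ℝ, 0 < ε → ∃ R : ℕ, ∀ x : V, R ≤ G.dist o x →
      |f (ψ (φ x)) - f x| < ε := by
  intro ε hε
  -- the function on pairs
  set F : V × V → ℝ≥0∞ := fun q =>
    if G.Adj q.1 q.2 then ENNReal.ofReal (|f q.2 - f q.1| ^ p) else 0 with hF
  have hFsum : ∑' q : V × V, F q ≠ ⊤ := by
    have heq : ∑' q : V × V, F q = Ip G p f :=
      ENNReal.tsum_prod
        (f := fun x y => if G.Adj x y then ENNReal.ofReal (|f y - f x| ^ p) else 0)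
    rw [heq]; exact hf
  set K : ℕ := ⌈a * (c + b)⌉₊ with hK
  set δ : ℝ := ε / (K + 1) with hδdef
  have hδpos : 0 < δ := by positivity
  have hbadfin : {q : V × V | ENNReal.ofReal (δ ^ p) ≤ F q}.Finite := by
    refine ENNReal.finite_const_le_of_tsum_ne_top hFsum ?_
    simp only [ne_eq, ENNReal.ofReal_eq_zero, not_le]
    exact Real.rpow_pos_of_pos hδpos p
  set R0 : ℕ := hbadfin.toFinset.sup (fun q => G.dist o q.1) with hR0
  refine ⟨R0 + K + 1, ?_⟩
  intro x hx
  have hdK : G.dist (ψ (φ x)) x ≤ K := by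
    have h1 : (G.dist (ψ (φ x)) x : ℝ) ≤ (K : ℝ) :=
      le_trans (hinv x) (Nat.le_ceil _)
    exact_mod_cast h1
  obtain ⟨w, hw⟩ := (hGc x (ψ (φ x))).exists_walk_length_eq_dist
  have hwlen : w.length ≤ K := by
    rw [hw, SimpleGraph.dist_comm]; exact hdK
  have hstep : ∀ a' b' : V, G.Adj a' b' → a' ∈ w.support → |f b' - f a'| ≤ δ := by
    intro a' b' hab ha
    by_contra hcon
    push_neg at hcon
    have hmem : (a', b') ∈ {q : V × V | ENNReal.ofReal (δ ^ p) ≤ F q} := by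
      simp only [Set.mem_setOf_eq, hF, hab, if_true]
      refine ENNReal.ofReal_le_ofReal ?_
      exact Real.rpow_le_rpow hδpos.le hcon.le (by linarith)
    have hsup : G.dist o a' ≤ R0 :=
      Finset.le_sup (f := fun q : V × V => G.dist o q.1) (hbadfin.mem_toFinset.mpr hmem)
    -- but a' is on the walk, so it is far from o
    have hxa : G.dist x a' ≤ K :=
      le_trans (le_trans (SimpleGraph.dist_le (w.takeUntil a' ha))
        (SimpleGraph.Walk.length_takeUntil_le w ha)) hwlen
    have htri : G.dist o x ≤ G.dist o a' + G.dist a' x := hGc.dist_triangle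
    have : R0 + K + 1 ≤ R0 + K := by
      calc R0 + K + 1 ≤ G.dist o x := hx
        _ ≤ G.dist o a' + G.dist a' x := htri
        _ ≤ R0 + K := by
            rw [SimpleGraph.dist_comm (u := a')]
            exact Nat.add_le_add hsup hxa
    omega
  have := walk_telescope f δ hδpos.le w hstep
  calc |f (ψ (φ x)) - f x| ≤ (w.length : ℝ) * δ := this
    _ ≤ (K : ℝ) * δ := by
        apply mul_le_mul_of_nonneg_right _ hδpos.le
        exact_mod_cast hwlen
    _ < (K + 1 : ℝ) * δ := by
        apply mul_lt_mul_of_pos_right _ hδpos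
        linarith
    _ = ε := by
        rw [hδdef]; field_simp
end

section
/- Let Γ be a finitely generated infinite group with finite generating set S, and p > 1. Then ℓ^p(Γ) is contained in the closure of Diff(D_p(Γ)/ℝ) in the D(p)-norm, where Diff(E) is the linear span of {f_x − f : f ∈ E, x ∈ Γ} and f_x(g) = f(gx⁻¹). Consequently the closures of Diff(D_p(Γ)/ℝ) and of ℓ^p(Γ) in D_p(Γ)/ℝ coincide. -/
open scoped ENNReal

variable {Γ : Type*} [Group Γ]

/-- The `p`-Dirichlet sum on a group with finite generating set `S`:
`Σ_{x∈Γ} Σ_{s∈S} |f(xs⁻¹) - f(x)|^p`. -/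
noncomputable def IpGrp (S : Finset Γ) (p : ℝ) (f : Γ → ℝ) : ℝ≥0∞ :=
  ∑' x : Γ, ∑ s ∈ S, ENNReal.ofReal (|f (x * s⁻¹) - f x| ^ p)

/-- Membership in `D_p(Γ)`. -/
def MemDp (S : Finset Γ) (p : ℝ) (f : Γ → ℝ) : Prop := IpGrp S p f ≠ ⊤

/-- Membership in `ℓ^p(Γ)`. -/
def MemLp' (p : ℝ) (f : Γ → ℝ) : Prop :=
  (∑' x : Γ, ENNReal.ofReal (|f x| ^ p)) ≠ ⊤

/-- `Diff(D_p(Γ)/ℝ)`: the linear span of `{f_x − f : f ∈ D_p(Γ), x ∈ Γ}`,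
where `f_x(g) = f(gx⁻¹)`. -/
def DiffDp (S : Finset Γ) (p : ℝ) : Set (Γ → ℝ) :=
  ↑(Submodule.span ℝ {g : Γ → ℝ | ∃ f : Γ → ℝ, MemDp S p f ∧
      ∃ x : Γ, g = fun y => f (y * x⁻¹) - f y})

/-- The closure of a set `A` in `D_p(Γ)/ℝ` with respect to the `D(p)`-norm
`‖[f]‖ = (I_p(f))^{1/p}` (which vanishes on constants). -/
def DClos (S : Finset Γ) (p : ℝ) (A : Set (Γ → ℝ)) : Set (Γ → ℝ) :=
  {f | MemDp S p f ∧ ∀ ε : ℝ, 0 < ε → ∃ g ∈ A,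
    IpGrp S p (fun y => f y - g y) < ENNReal.ofReal (ε ^ p)}

set_option linter.unusedSectionVars false

/-! ### Auxiliary material -/

noncomputable def LpSum {Γ : Type*} (p : ℝ) (f : Γ → ℝ) : ℝ≥0∞ :=
  ∑' x : Γ, ENNReal.ofReal (|f x| ^ p)

section aux

variable {p : ℝ}

lemma rpow_abs_add_le (hp : 0 ≤ p) (a b : ℝ) :
    |a + b| ^ p ≤ 2 ^ p * (|a| ^ p + |b| ^ p) := by
  have h1 : |a + b| ≤ 2 * max |a| |b| := by
    refine (abs_add_le a b).trans ?_
    rcases max_cases |a| |b| with ⟨h, h2⟩ | ⟨h, h2⟩ <;> rw [h] <;> nlinarith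
  calc |a + b| ^ p ≤ (2 * max |a| |b|) ^ p :=
        Real.rpow_le_rpow (abs_nonneg _) h1 hp
    _ = 2 ^ p * (max |a| |b|) ^ p := by
        rw [Real.mul_rpow (by norm_num) (le_max_of_le_left (abs_nonneg a))]
    _ ≤ 2 ^ p * (|a| ^ p + |b| ^ p) := by
        refine mul_le_mul_of_nonneg_left ?_ (Real.rpow_nonneg (by norm_num) p)
        rcases max_cases |a| |b| with ⟨h, _⟩ | ⟨h, _⟩ <;> rw [h]
        · exact le_add_of_nonneg_right (Real.rpow_nonneg (abs_nonneg _) p)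
        · exact le_add_of_nonneg_left (Real.rpow_nonneg (abs_nonneg _) p)

lemma ofReal_rpow_abs_add_le (hp : 0 ≤ p) (a b : ℝ) :
    ENNReal.ofReal (|a + b| ^ p) ≤
      ENNReal.ofReal (2 ^ p) * (ENNReal.ofReal (|a| ^ p) + ENNReal.ofReal (|b| ^ p)) := by
  rw [← ENNReal.ofReal_add (Real.rpow_nonneg (abs_nonneg _) p) (Real.rpow_nonneg (abs_nonneg _) p),
    ← ENNReal.ofReal_mul (Real.rpow_nonneg (by norm_num) p)]
  exact ENNReal.ofReal_le_ofReal (rpow_abs_add_le hp a b)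

lemma LpSum_translate (f : Γ → ℝ) (a : Γ) :
    LpSum p (fun y => f (y * a)) = LpSum p f := by
  unfold LpSum
  exact Equiv.tsum_eq (Equiv.mulRight a) (fun y => ENNReal.ofReal (|f y| ^ p))

lemma LpSum_neg (f : Γ → ℝ) : LpSum p (fun y => - f y) = LpSum p f := by
  unfold LpSum; simp [abs_neg]

lemma LpSum_smul (c : ℝ) (f : Γ → ℝ) :
    LpSum p (fun y => c * f y) = ENNReal.ofReal (|c| ^ p) * LpSum p f := by
  unfold LpSum
  rw [← ENNReal.tsum_mul_left]
  congr 1; funext y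
  rw [abs_mul, Real.mul_rpow (abs_nonneg _) (abs_nonneg _),
    ENNReal.ofReal_mul (Real.rpow_nonneg (abs_nonneg _) p)]

lemma IpGrp_le_LpSum (hp : 0 ≤ p) (S : Finset Γ) (f : Γ → ℝ) :
    IpGrp S p f ≤ ENNReal.ofReal (2 ^ p) * (2 * S.card) * LpSum p f := by
  have h1 : IpGrp S p f ≤ ∑ s ∈ S, ∑' x : Γ,
      (ENNReal.ofReal (2 ^ p) * (ENNReal.ofReal (|f (x * s⁻¹)| ^ p)
        + ENNReal.ofReal (|f x| ^ p))) := by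
    rw [IpGrp, ← Summable.tsum_finsetSum (fun s _ => ENNReal.summable)]
    refine ENNReal.tsum_le_tsum fun x => Finset.sum_le_sum fun s _ => ?_
    have := ofReal_rpow_abs_add_le (p := p) hp (f (x * s⁻¹)) (-(f x))
    simpa [sub_eq_add_neg, abs_neg] using this
  refine h1.trans ?_
  have h2 : ∀ s ∈ S, (∑' x : Γ, (ENNReal.ofReal (2 ^ p) * (ENNReal.ofReal (|f (x * s⁻¹)| ^ p)
        + ENNReal.ofReal (|f x| ^ p)))) = ENNReal.ofReal (2 ^ p) * (2 * LpSum p f) := by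
    intro s _
    rw [ENNReal.tsum_mul_left, ENNReal.tsum_add]
    have := LpSum_translate (p := p) f s⁻¹
    rw [show (∑' x : Γ, ENNReal.ofReal (|f (x * s⁻¹)| ^ p))
      = LpSum p (fun y => f (y * s⁻¹)) from rfl, this]
    rw [show (∑' x : Γ, ENNReal.ofReal (|f x| ^ p)) = LpSum p f from rfl]
    ring
  rw [Finset.sum_congr rfl h2, Finset.sum_const, nsmul_eq_mul]
  apply le_of_eq; ring

lemma IpGrp_add_le (hp : 0 ≤ p) (S : Finset Γ) (u v : Γ → ℝ) :
    IpGrp S p (fun y => u y + v y) ≤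
      ENNReal.ofReal (2 ^ p) * (IpGrp S p u + IpGrp S p v) := by
  have h1 : IpGrp S p (fun y => u y + v y) ≤
      ∑' x : Γ, ∑ s ∈ S, (ENNReal.ofReal (2 ^ p) *
        (ENNReal.ofReal (|u (x * s⁻¹) - u x| ^ p) + ENNReal.ofReal (|v (x * s⁻¹) - v x| ^ p))) := by
    refine ENNReal.tsum_le_tsum fun x => Finset.sum_le_sum fun s _ => ?_
    have := ofReal_rpow_abs_add_le (p := p) hp (u (x * s⁻¹) - u x) (v (x * s⁻¹) - v x)
    have e : u (x * s⁻¹) + v (x * s⁻¹) - (u x + v x)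
        = (u (x * s⁻¹) - u x) + (v (x * s⁻¹) - v x) := by ring
    simpa [e] using this
  refine h1.trans (le_of_eq ?_)
  rw [IpGrp, IpGrp, ← ENNReal.tsum_add, ← ENNReal.tsum_mul_left]
  refine tsum_congr fun x => ?_
  rw [← Finset.sum_add_distrib, Finset.mul_sum]

lemma exists_truncation [DecidableEq Γ] (hp : 0 < p) (f : Γ → ℝ)
    (hf : LpSum p f ≠ ⊤) (δ : ℝ≥0∞) (hδ : δ ≠ 0) :
    ∃ F : Finset Γ, LpSum p (fun y => f y - if y ∈ F then f y else 0) < δ := by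
  classical
  set a : Γ → ℝ≥0∞ := fun y => ENNReal.ofReal (|f y| ^ p) with ha
  have hterm : ∀ (F : Finset Γ),
      LpSum p (fun y => f y - if y ∈ F then f y else 0)
        = ∑' (y : ((F : Set Γ)ᶜ : Set Γ)), a ↑y := by
    intro F
    rw [tsum_subtype]
    refine tsum_congr fun y => ?_
    by_cases hy : y ∈ F
    · simp [Set.indicator_apply, hy, abs_zero, Real.zero_rpow hp.ne']
    · simp [Set.indicator_apply, hy, ha]
  have hfa : (∑' y, a y) ≠ ⊤ := hf
  by_cases htot : (∑' y, a y) = 0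
  · refine ⟨∅, ?_⟩
    rw [hterm]
    have : ∑' (y : (((∅ : Finset Γ) : Set Γ)ᶜ : Set Γ)), a ↑y ≤ ∑' y, a y := by
      rw [tsum_subtype]
      exact ENNReal.tsum_le_tsum (fun y => Set.indicator_le_self _ _ y)
    rw [htot] at this
    exact lt_of_le_of_lt this (pos_iff_ne_zero.mpr hδ)
  by_cases hδt : δ = ⊤
  · refine ⟨∅, ?_⟩
    rw [hterm, hδt]
    have : ∑' (y : (((∅ : Finset Γ) : Set Γ)ᶜ : Set Γ)), a ↑y ≤ ∑' y, a y := by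
      rw [tsum_subtype]
      exact ENNReal.tsum_le_tsum (fun y => Set.indicator_le_self _ _ y)
    exact lt_of_le_of_lt this (lt_top_iff_ne_top.mpr hfa)
  have hsub : (∑' y, a y) - δ < ∑' y, a y := ENNReal.sub_lt_self hfa htot hδ
  rw [ENNReal.tsum_eq_iSup_sum] at hsub
  nth_rewrite 1 [← ENNReal.tsum_eq_iSup_sum] at hsub
  obtain ⟨F, hF⟩ := lt_iSup_iff.mp hsub
  refine ⟨F, ?_⟩
  rw [hterm]
  have hsplit : (∑' (y : (F : Set Γ)), a ↑y) + ∑' (y : ((F : Set Γ)ᶜ : Set Γ)), a ↑y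
      = ∑' y, a y := Summable.tsum_add_tsum_compl ENNReal.summable ENNReal.summable
  have hFsum : (∑' (y : (F : Set Γ)), a ↑y) = ∑ y ∈ F, a y := Finset.tsum_subtype F a
  rw [hFsum] at hsplit
  have hFne : (∑ y ∈ F, a y) ≠ ⊤ := by
    intro h
    rw [← hsplit, h] at hfa
    simp at hfa
  have h2 : (∑' y, a y) < (∑ y ∈ F, a y) + δ := by
    calc (∑' y, a y) ≤ ((∑' y, a y) - δ) + δ := le_tsub_add
      _ < (∑ y ∈ F, a y) + δ := ENNReal.add_lt_add_right hδt hF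
  rw [← hsplit] at h2
  exact (ENNReal.add_lt_add_iff_left hFne).mp h2

lemma exists_disjoint_translates [Infinite Γ] (F : Finset Γ) (n : ℕ) :
    ∃ x : Fin n → Γ, ∀ i j : Fin n, ∀ a b : Γ, a ∈ F → b ∈ F → a * x i = b * x j → i = j := by
  induction n with
  | zero => exact ⟨Fin.elim0, fun i => i.elim0⟩
  | succ n ih =>
    obtain ⟨x, hx⟩ := ih
    set B : Set Γ := {z | ∃ i : Fin n, ∃ a ∈ F, ∃ b ∈ F, a * z = b * x i} with hB
    have hBfin : B.Finite := by
      refine Set.Finite.subset (Set.finite_range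
        (fun q : Fin n × F × F => (q.2.1 : Γ)⁻¹ * ((q.2.2 : Γ) * x q.1))) ?_
      rintro z ⟨i, a, ha, b, hb, hab⟩
      exact ⟨⟨i, ⟨a, ha⟩, ⟨b, hb⟩⟩, by simp only []; rw [← hab]; group⟩
    obtain ⟨z, hz⟩ := (hBfin.infinite_compl).nonempty
    refine ⟨Fin.cons z x, fun i j => ?_⟩
    refine Fin.cases ?_ ?_ i <;> clear i
    · refine Fin.cases ?_ ?_ j <;> clear j
      · intro a b _ _ _; rfl
      · intro j a b ha hb hab
        rw [Fin.cons_zero, Fin.cons_succ] at hab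
        exact absurd ⟨j, a, ha, b, hb, hab⟩ hz
    · intro i
      refine Fin.cases ?_ ?_ j <;> clear j
      · intro a b ha hb hab
        rw [Fin.cons_zero, Fin.cons_succ] at hab
        exact absurd ⟨i, b, hb, a, ha, hab.symm⟩ hz
      · intro j a b ha hb hab
        rw [Fin.cons_succ, Fin.cons_succ] at hab
        exact congrArg Fin.succ (hx i j a b ha hb hab)

lemma abs_sum_rpow_le (hp : 0 < p) {n : ℕ} (u : Fin n → ℝ)
    (h : ∀ i j, u i ≠ 0 → u j ≠ 0 → i = j) :
    |∑ i, u i| ^ p ≤ ∑ i, |u i| ^ p := by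
  by_cases hall : ∀ i, u i = 0
  · simp [hall, Real.zero_rpow hp.ne']
  push_neg at hall
  obtain ⟨i₀, hi₀⟩ := hall
  have hsum : (∑ i, u i) = u i₀ := by
    refine Finset.sum_eq_single i₀ (fun j _ hj => ?_) (fun h => absurd (Finset.mem_univ i₀) h)
    by_contra hne
    exact hj (h j i₀ hne hi₀)
  rw [hsum]
  exact Finset.single_le_sum (f := fun i => |u i| ^ p)
    (fun i _ => Real.rpow_nonneg (abs_nonneg _) p) (Finset.mem_univ i₀)

lemma LpSum_avg_le (hp : 0 < p) (F : Finset Γ) (f' : Γ → ℝ)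
    (hsupp : ∀ y, f' y ≠ 0 → y ∈ F) {n : ℕ} (x : Fin n → Γ)
    (hx : ∀ i j : Fin n, ∀ a b : Γ, a ∈ F → b ∈ F → a * x i = b * x j → i = j) (c : ℝ) :
    LpSum p (fun y => ∑ i, c * f' (y * (x i)⁻¹)) ≤
      n * (ENNReal.ofReal (|c| ^ p) * LpSum p f') := by
  have key : ∀ y : Γ, ENNReal.ofReal (|∑ i, c * f' (y * (x i)⁻¹)| ^ p) ≤
      ∑ i, ENNReal.ofReal (|c * f' (y * (x i)⁻¹)| ^ p) := by
    intro y
    rw [← ENNReal.ofReal_sum_of_nonneg (fun i _ => Real.rpow_nonneg (abs_nonneg _) p)]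
    refine ENNReal.ofReal_le_ofReal (abs_sum_rpow_le hp _ fun i j hi hj => ?_)
    have hai : f' (y * (x i)⁻¹) ≠ 0 := fun h => hi (by simp [h])
    have haj : f' (y * (x j)⁻¹) ≠ 0 := fun h => hj (by simp [h])
    refine hx i j _ _ (hsupp _ hai) (hsupp _ haj) ?_
    group
  calc LpSum p (fun y => ∑ i, c * f' (y * (x i)⁻¹))
      ≤ ∑' y : Γ, ∑ i, ENNReal.ofReal (|c * f' (y * (x i)⁻¹)| ^ p) :=
        ENNReal.tsum_le_tsum key
    _ = ∑ i, ∑' y : Γ, ENNReal.ofReal (|c * f' (y * (x i)⁻¹)| ^ p) :=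
        Summable.tsum_finsetSum (fun _ _ => ENNReal.summable)
    _ = ∑ i : Fin n, ENNReal.ofReal (|c| ^ p) * LpSum p f' := by
        refine Finset.sum_congr rfl fun i _ => ?_
        have h1 : (∑' y : Γ, ENNReal.ofReal (|c * f' (y * (x i)⁻¹)| ^ p))
            = LpSum p (fun y => c * f' (y * (x i)⁻¹)) := rfl
        rw [h1, show (fun y => c * f' (y * (x i)⁻¹))
            = (fun y => (fun z => c * f' z) (y * (x i)⁻¹)) from rfl,
          LpSum_translate (fun z => c * f' z) (x i)⁻¹, LpSum_smul]
    _ = n * (ENNReal.ofReal (|c| ^ p) * LpSum p f') := by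
        rw [Finset.sum_const, Finset.card_univ, Fintype.card_fin, nsmul_eq_mul]

lemma exists_good_n (hp : 1 < p) {L ι : ℝ≥0∞} (hL : L ≠ ⊤) (hι : ι ≠ 0) :
    ∃ n : ℕ, 0 < n ∧ (n : ℝ≥0∞) * ENNReal.ofReal ((1 / (n : ℝ)) ^ p) * L < ι := by
  obtain ⟨ι', hι'pos, hι'le⟩ : ∃ ι' : ℝ, 0 < ι' ∧ ENNReal.ofReal ι' ≤ ι := by
    by_cases h : ι = ⊤
    · exact ⟨1, one_pos, by simp [h]⟩
    · exact ⟨ι.toReal, ENNReal.toReal_pos hι h, by rw [ENNReal.ofReal_toReal h]⟩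
  set M : ℝ := L.toReal with hM
  have hMnn : 0 ≤ M := ENNReal.toReal_nonneg
  have htend : Filter.Tendsto (fun n : ℕ => ((n : ℝ)) ^ (-(p - 1)) * M)
      Filter.atTop (nhds 0) := by
    have h1 : Filter.Tendsto (fun x : ℝ => x ^ (-(p - 1))) Filter.atTop (nhds 0) :=
      tendsto_rpow_neg_atTop (by linarith)
    have := (h1.comp (tendsto_natCast_atTop_atTop (R := ℝ))).mul_const M
    simpa using this
  have hev1 : ∀ᶠ n : ℕ in Filter.atTop, ((n : ℝ)) ^ (-(p - 1)) * M < ι' :=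
    htend.eventually_lt_const hι'pos
  have hev2 : ∀ᶠ n : ℕ in Filter.atTop, 1 ≤ n := Filter.eventually_ge_atTop 1
  obtain ⟨n, hn1, hn2⟩ := (hev1.and hev2).exists
  refine ⟨n, hn2, ?_⟩
  have hnpos : (0 : ℝ) < n := by exact_mod_cast hn2
  have hkey : (n : ℝ) * (1 / (n : ℝ)) ^ p * M < ι' := by
    have : (n : ℝ) * (1 / (n : ℝ)) ^ p = ((n : ℝ)) ^ (-(p - 1)) := by
      rw [one_div, ← Real.rpow_neg_one (n : ℝ), ← Real.rpow_mul hnpos.le]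
      nth_rewrite 1 [← Real.rpow_one (n : ℝ)]
      rw [← Real.rpow_add hnpos]
      ring_nf
    rw [this]; exact hn1
  calc (n : ℝ≥0∞) * ENNReal.ofReal ((1 / (n : ℝ)) ^ p) * L
      ≤ ENNReal.ofReal ((n : ℝ) * (1 / (n : ℝ)) ^ p * M) := by
        rw [ENNReal.ofReal_mul (by positivity), ENNReal.ofReal_mul (by positivity)]
        rw [ENNReal.ofReal_natCast]
        exact mul_le_mul_right (le_of_eq (ENNReal.ofReal_toReal hL).symm) _
    _ < ENNReal.ofReal ι' := (ENNReal.ofReal_lt_ofReal_iff hι'pos).mpr hkey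
    _ ≤ ι := hι'le

lemma memLp'_iff (f : Γ → ℝ) : MemLp' p f ↔ LpSum p f ≠ ⊤ := Iff.rfl

lemma LpSum_add_le (hp : 0 ≤ p) (f g : Γ → ℝ) :
    LpSum p (fun y => f y + g y) ≤ ENNReal.ofReal (2 ^ p) * (LpSum p f + LpSum p g) := by
  calc LpSum p (fun y => f y + g y)
      ≤ ∑' y : Γ, (ENNReal.ofReal (2 ^ p) *
          (ENNReal.ofReal (|f y| ^ p) + ENNReal.ofReal (|g y| ^ p))) :=
        ENNReal.tsum_le_tsum fun y => ofReal_rpow_abs_add_le hp (f y) (g y)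
    _ = ENNReal.ofReal (2 ^ p) * (LpSum p f + LpSum p g) := by
        rw [ENNReal.tsum_mul_left, ENNReal.tsum_add]; rfl

lemma MemLp'.add (hp : 0 ≤ p) {f g : Γ → ℝ} (hf : MemLp' p f) (hg : MemLp' p g) :
    MemLp' p (fun y => f y + g y) := by
  rw [memLp'_iff] at *
  intro h
  have := lt_of_le_of_lt (h ▸ LpSum_add_le hp f g :
    (⊤ : ℝ≥0∞) ≤ ENNReal.ofReal (2 ^ p) * (LpSum p f + LpSum p g))
    (lt_top_iff_ne_top.mpr (ENNReal.mul_ne_top ENNReal.ofReal_ne_top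
      (ENNReal.add_ne_top.mpr ⟨hf, hg⟩)))
  exact absurd this (lt_irrefl _)

lemma MemLp'.translate {f : Γ → ℝ} (hf : MemLp' p f) (a : Γ) :
    MemLp' p (fun y => f (y * a)) := by
  rw [memLp'_iff, LpSum_translate]; exact hf

lemma MemLp'.neg {f : Γ → ℝ} (hf : MemLp' p f) : MemLp' p (fun y => - f y) := by
  rw [memLp'_iff, LpSum_neg]; exact hf

lemma MemLp'.smul {f : Γ → ℝ} (hf : MemLp' p f) (c : ℝ) : MemLp' p (fun y => c * f y) := by
  rw [memLp'_iff, LpSum_smul]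
  exact ENNReal.mul_ne_top ENNReal.ofReal_ne_top hf

lemma MemLp'.memDp (hp : 0 ≤ p) {S : Finset Γ} {f : Γ → ℝ} (hf : MemLp' p f) :
    MemDp S p f := by
  intro h
  have h2 := lt_of_le_of_lt (h ▸ IpGrp_le_LpSum hp S f :
    (⊤ : ℝ≥0∞) ≤ ENNReal.ofReal (2 ^ p) * (2 * S.card) * LpSum p f)
    (lt_top_iff_ne_top.mpr (ENNReal.mul_ne_top
      (ENNReal.mul_ne_top ENNReal.ofReal_ne_top (by simp [ENNReal.mul_ne_top])) hf))
  exact absurd h2 (lt_irrefl _)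

lemma diff_memLp' {S : Finset Γ} (hS : Subgroup.closure (S : Set Γ) = ⊤) (hp : 0 < p)
    {f : Γ → ℝ} (hf : MemDp S p f) (x : Γ) :
    MemLp' p (fun y => f (y * x⁻¹) - f y) := by
  have hx : x ∈ Subgroup.closure (S : Set Γ) := hS ▸ Subgroup.mem_top x
  induction hx using Subgroup.closure_induction with
  | mem s hs =>
      rw [memLp'_iff]
      intro h
      apply hf
      rw [eq_top_iff, ← h]
      refine ENNReal.tsum_le_tsum fun y => ?_
      exact Finset.single_le_sum (f := fun t => ENNReal.ofReal (|f (y * t⁻¹) - f y| ^ p))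
        (fun t _ => zero_le) hs
  | one =>
      rw [memLp'_iff]
      have : (fun y => f (y * (1 : Γ)⁻¹) - f y) = fun _ => (0 : ℝ) := by
        funext y; simp
      rw [this]
      simp [LpSum, abs_zero, Real.zero_rpow hp.ne']
  | mul a b _ _ iha ihb =>
      have key : (fun y => f (y * (a * b)⁻¹) - f y)
          = fun y => ((fun z => f (z * a⁻¹) - f z) (y * b⁻¹))
            + ((fun z => f (z * b⁻¹) - f z) y) := by
        funext y; simp only [mul_inv_rev, ← mul_assoc]; ring
      rw [key]
      exact MemLp'.add hp.le (MemLp'.translate iha b⁻¹) ihb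
  | inv a _ iha =>
      have key : (fun y => f (y * a⁻¹⁻¹) - f y)
          = fun y => - ((fun z => f (z * a⁻¹) - f z) (y * a)) := by
        funext y; simp [mul_assoc]
      rw [key]
      exact MemLp'.neg (MemLp'.translate iha a)

def myLpSubmodule (Γ : Type*) [Group Γ] (p : ℝ) (hp : 0 < p) : Submodule ℝ (Γ → ℝ) where
  carrier := {f | MemLp' p f}
  add_mem' := fun hf hg => MemLp'.add hp.le hf hg
  zero_mem' := by
    show MemLp' p (fun _ => (0:ℝ))
    rw [memLp'_iff]
    simp [LpSum, abs_zero, Real.zero_rpow hp.ne']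
  smul_mem' := fun c f hf => MemLp'.smul hf c

lemma DiffDp_subset_memLp' {S : Finset Γ} (hS : Subgroup.closure (S : Set Γ) = ⊤)
    (hp : 0 < p) : DiffDp S p ⊆ {f : Γ → ℝ | MemLp' p f} := by
  have hle : Submodule.span ℝ {g : Γ → ℝ | ∃ f : Γ → ℝ, MemDp S p f ∧
      ∃ x : Γ, g = fun y => f (y * x⁻¹) - f y} ≤ myLpSubmodule Γ p hp := by
    rw [Submodule.span_le]
    rintro g ⟨f, hfD, x, rfl⟩
    exact diff_memLp' hS hp hfD x
  exact fun g hg => hle hg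

lemma main_approx [Infinite Γ] (S : Finset Γ) (hp : 1 < p) (f : Γ → ℝ) (hf : MemLp' p f)
    (δ : ℝ≥0∞) (hδ : δ ≠ 0) :
    ∃ h ∈ DiffDp S p, IpGrp S p (fun y => f y - h y) < δ := by
  classical
  have hp0 : (0 : ℝ) < p := lt_trans one_pos hp
  set C : ℝ≥0∞ := ENNReal.ofReal (2 ^ p) * (2 * S.card) with hC
  have hCtop : C ≠ ⊤ := ENNReal.mul_ne_top ENNReal.ofReal_ne_top (by simp [ENNReal.mul_ne_top])
  set M : ℝ≥0∞ := ENNReal.ofReal (2 ^ p) * C + 1 with hM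
  have hMne : M ≠ 0 := by simp [hM]
  have hMtop : M ≠ ⊤ := by
    simp only [hM]
    exact ENNReal.add_ne_top.mpr ⟨ENNReal.mul_ne_top ENNReal.ofReal_ne_top hCtop, ENNReal.one_ne_top⟩
  set ι : ℝ≥0∞ := δ / (2 * M) with hι
  have hιne : ι ≠ 0 := by
    refine (ENNReal.div_pos hδ ?_).ne'
    exact ENNReal.mul_ne_top (by simp) hMtop
  -- truncation
  obtain ⟨F, hF⟩ := exists_truncation hp0 f hf ι hιne
  set f' : Γ → ℝ := fun y => if y ∈ F then f y else 0 with hf'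
  have hf'supp : ∀ y, f' y ≠ 0 → y ∈ F := by
    intro y hy
    by_contra hc
    simp [hf', hc] at hy
  have hf'le : LpSum p f' ≤ LpSum p f := by
    refine ENNReal.tsum_le_tsum fun y => ?_
    refine ENNReal.ofReal_le_ofReal (Real.rpow_le_rpow (abs_nonneg _) ?_ hp0.le)
    by_cases hy : y ∈ F <;> simp [hf', hy]
  have hf'Lp : MemLp' p f' := by
    rw [memLp'_iff]
    exact ne_top_of_le_ne_top hf hf'le
  have hf'Dp : MemDp S p f' := hf'Lp.memDp hp0.le
  -- choose n
  obtain ⟨n, hnpos, hnlt⟩ := exists_good_n hp (L := LpSum p f') (ι := ι) hf'Lp hιne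
  obtain ⟨x, hx⟩ := exists_disjoint_translates F n
  set c : ℝ := 1 / (n : ℝ) with hc
  have hcpos : 0 < c := by positivity
  have hnc : (n : ℝ) * c = 1 := by
    rw [hc]
    have : (n : ℝ) ≠ 0 := by exact_mod_cast hnpos.ne'
    field_simp
  set g : Γ → ℝ := fun y => ∑ i : Fin n, c * f' (y * (x i)⁻¹) with hg
  set h : Γ → ℝ := fun y => ∑ i : Fin n, c * (f' y - f' (y * (x i)⁻¹)) with hh
  refine ⟨h, ?_, ?_⟩
  · -- h ∈ Diff
    show h ∈ (Submodule.span ℝ {g : Γ → ℝ | ∃ f : Γ → ℝ, MemDp S p f ∧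
      ∃ x : Γ, g = fun y => f (y * x⁻¹) - f y} : Submodule ℝ (Γ → ℝ))
    have hrepr : h = ∑ i : Fin n, (-c) • (fun y => f' (y * (x i)⁻¹) - f' y) := by
      funext y
      simp only [hh]
      simp only [Finset.sum_apply, Pi.smul_apply, smul_eq_mul]
      exact Finset.sum_congr rfl fun i _ => by ring
    rw [hrepr]
    exact Submodule.sum_mem _ fun i _ => Submodule.smul_mem _ _
      (Submodule.subset_span ⟨f', hf'Dp, x i, rfl⟩)
  · -- the estimate
    have hkey : (fun y => f y - h y) = fun y => (f y - f' y) + g y := by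
      funext y
      simp only [hh, hg]
      have e1 : ∑ i : Fin n, c * (f' y - f' (y * (x i)⁻¹))
          = (∑ i : Fin n, c * f' y) - ∑ i : Fin n, c * f' (y * (x i)⁻¹) := by
        rw [← Finset.sum_sub_distrib]
        exact Finset.sum_congr rfl fun i _ => by ring
      have e2 : (∑ i : Fin n, c * f' y) = f' y := by
        rw [Finset.sum_const, Finset.card_univ, Fintype.card_fin, nsmul_eq_mul, ← mul_assoc,
          hnc, one_mul]
      rw [e1, e2]
      ring
    -- LpSum g is small
    have hgsmall : LpSum p g < ι := by
      refine lt_of_le_of_lt (LpSum_avg_le hp0 F f' hf'supp x hx c) ?_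
      rw [abs_of_pos hcpos, hc]
      calc (n : ℝ≥0∞) * (ENNReal.ofReal ((1 / (n : ℝ)) ^ p) * LpSum p f')
          = (n : ℝ≥0∞) * ENNReal.ofReal ((1 / (n : ℝ)) ^ p) * LpSum p f' := by ring
        _ < ι := hnlt
    -- combine
    rw [hkey]
    have step1 : IpGrp S p (fun y => (f y - f' y) + g y) ≤
        ENNReal.ofReal (2 ^ p) * (IpGrp S p (fun y => f y - f' y) + IpGrp S p g) :=
      IpGrp_add_le hp0.le S _ _
    have step2 : IpGrp S p (fun y => f y - f' y) ≤ C * LpSum p (fun y => f y - f' y) := by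
      have := IpGrp_le_LpSum hp0.le S (fun y => f y - f' y)
      rwa [← hC] at this
    have step3 : IpGrp S p g ≤ C * LpSum p g := by
      have := IpGrp_le_LpSum hp0.le S g
      rwa [← hC] at this
    have hFsmall : LpSum p (fun y => f y - f' y) < ι := hF
    have step4 : IpGrp S p (fun y => (f y - f' y) + g y) ≤
        M * (LpSum p (fun y => f y - f' y) + LpSum p g) := by
      refine step1.trans ?_
      calc ENNReal.ofReal (2 ^ p) * (IpGrp S p (fun y => f y - f' y) + IpGrp S p g)
          ≤ ENNReal.ofReal (2 ^ p) * (C * LpSum p (fun y => f y - f' y) + C * LpSum p g) := by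
            exact mul_le_mul_right (add_le_add step2 step3) _
        _ = (ENNReal.ofReal (2 ^ p) * C) * (LpSum p (fun y => f y - f' y) + LpSum p g) := by
            ring
        _ ≤ M * (LpSum p (fun y => f y - f' y) + LpSum p g) := by
            refine mul_le_mul_left ?_ _
            rw [hM]
            exact le_add_of_nonneg_right zero_le
    refine lt_of_le_of_lt step4 ?_
    have hsum2 : LpSum p (fun y => f y - f' y) + LpSum p g < ι + ι :=
      ENNReal.add_lt_add hFsmall hgsmall
    calc M * (LpSum p (fun y => f y - f' y) + LpSum p g)
        < M * (ι + ι) := by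
          rw [ENNReal.mul_lt_mul_iff_right hMne hMtop]
          exact hsum2
      _ = (2 * M) * ι := by ring
      _ = (2 * M) * (δ / (2 * M)) := by rw [hι]
      _ ≤ δ := ENNReal.mul_div_le

end aux

set_option linter.unusedSectionVars true

theorem stmt19 [Infinite Γ] (S : Finset Γ)
    (hS : Subgroup.closure (S : Set Γ) = ⊤) (p : ℝ) (hp : 1 < p) :
    (∀ f : Γ → ℝ, MemLp' p f → f ∈ DClos S p (DiffDp S p)) ∧
    DClos S p (DiffDp S p) = DClos S p {f : Γ → ℝ | MemLp' p f} := by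
  have hp0 : (0 : ℝ) < p := lt_trans one_pos hp
  have part1 : ∀ f : Γ → ℝ, MemLp' p f → f ∈ DClos S p (DiffDp S p) := by
    intro f hf
    refine ⟨hf.memDp hp0.le, fun ε hε => ?_⟩
    have hδ : ENNReal.ofReal (ε ^ p) ≠ 0 :=
      (ENNReal.ofReal_pos.mpr (Real.rpow_pos_of_pos hε p)).ne'
    exact main_approx S hp f hf (ENNReal.ofReal (ε ^ p)) hδ
  refine ⟨part1, ?_⟩
  ext f
  constructor
  · rintro ⟨hfD, hap⟩
    refine ⟨hfD, fun ε hε => ?_⟩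
    obtain ⟨g, hgDiff, hlt⟩ := hap ε hε
    exact ⟨g, DiffDp_subset_memLp' hS hp0 hgDiff, hlt⟩
  · rintro ⟨hfD, hap⟩
    refine ⟨hfD, fun ε hε => ?_⟩
    have hε4 : 0 < ε / 4 := by positivity
    obtain ⟨g, hgLp, hg⟩ := hap (ε / 4) hε4
    obtain ⟨h, hhDiff, hh⟩ := main_approx S hp g hgLp (ENNReal.ofReal ((ε / 4) ^ p))
      (ENNReal.ofReal_pos.mpr (Real.rpow_pos_of_pos hε4 p)).ne'
    refine ⟨h, hhDiff, ?_⟩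
    have hkey : (fun y => f y - h y) = fun y => (f y - g y) + (g y - h y) := by
      funext y; ring
    rw [hkey]
    have step1 : IpGrp S p (fun y => (f y - g y) + (g y - h y)) ≤
        ENNReal.ofReal (2 ^ p) * (IpGrp S p (fun y => f y - g y)
          + IpGrp S p (fun y => g y - h y)) := IpGrp_add_le hp0.le S _ _
    refine lt_of_le_of_lt step1 ?_
    have h2ne : (ENNReal.ofReal (2 ^ p)) ≠ 0 :=
      (ENNReal.ofReal_pos.mpr (Real.rpow_pos_of_pos two_pos p)).ne'
    have hsum : IpGrp S p (fun y => f y - g y) + IpGrp S p (fun y => g y - h y)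
        < ENNReal.ofReal ((ε / 4) ^ p) + ENNReal.ofReal ((ε / 4) ^ p) :=
      ENNReal.add_lt_add hg hh
    calc ENNReal.ofReal (2 ^ p) * (IpGrp S p (fun y => f y - g y)
          + IpGrp S p (fun y => g y - h y))
        < ENNReal.ofReal (2 ^ p) *
            (ENNReal.ofReal ((ε / 4) ^ p) + ENNReal.ofReal ((ε / 4) ^ p)) := by
          rw [ENNReal.mul_lt_mul_iff_right h2ne ENNReal.ofReal_ne_top]
          exact hsum
      _ ≤ ENNReal.ofReal (ε ^ p) := by
          rw [← ENNReal.ofReal_add (by positivity) (by positivity),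
            ← ENNReal.ofReal_mul (by positivity)]
          refine ENNReal.ofReal_le_ofReal ?_
          have e1 : (ε / 4) ^ p = ε ^ p * (1 / 4 : ℝ) ^ p := by
            rw [← Real.mul_rpow hε.le (by norm_num)]
            ring_nf
          have e2 : (2 : ℝ) ^ p * (1 / 4 : ℝ) ^ p = (1 / 2 : ℝ) ^ p := by
            rw [← Real.mul_rpow (by norm_num) (by norm_num)]
            norm_num
          have e3 : (1 / 2 : ℝ) ^ p ≤ (1 / 2 : ℝ) ^ (1 : ℝ) :=
            Real.rpow_le_rpow_of_exponent_ge (by norm_num) (by norm_num) hp.le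
          rw [Real.rpow_one] at e3
          calc (2 : ℝ) ^ p * ((ε / 4) ^ p + (ε / 4) ^ p)
              = ε ^ p * (2 * ((2:ℝ) ^ p * (1 / 4 : ℝ) ^ p)) := by rw [e1]; ring
            _ = ε ^ p * (2 * (1 / 2 : ℝ) ^ p) := by rw [e2]
            _ ≤ ε ^ p * (2 * (1/2)) := by
                refine mul_le_mul_of_nonneg_left ?_ (Real.rpow_nonneg hε.le p)
                nlinarith [e3]
            _ = ε ^ p := by ring
end
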